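/- arXiv:2203.00264 — 6 statements merged into one kernel-verified Lean document; each statement's English description precedes it below -/
import Mathlib

section
/- For any α > 0 and any z = x + iy in the upper half plane, the theta function θ(α; z) = Σ_{(m,n)∈ℤ²} exp(−απ|mz+n|²/y) satisfies the functional identity θ(1/α; z) = α·θ(α; z). -/
open Real Complex

lemma sum1 (β : ℝ) (hβ : 0 < β) (b : ℂ) :
    Summable fun n : ℤ => Complex.exp (-π * β * n ^ 2 + b * n) := by
  have h := (summable_jacobiTheta₂_term_iff (b / (2 * π * Complex.I)) (Complex.I * β)).mpr
    (by simpa using hβ)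
  refine h.congr fun n => ?_
  simp only [jacobiTheta₂_term]
  congr 1
  have h2 : (2 * (π : ℂ) * Complex.I) ≠ 0 := by
    simp [Real.pi_ne_zero, Complex.I_ne_zero]
  field_simp
  ring_nf
  rw [Complex.I_sq]
  ring

lemma sum_shift_c (β t : ℝ) (hβ : 0 < β) :
    Summable fun n : ℤ => Complex.exp (-π * β * ((n : ℂ) + t) ^ 2) := by
  have h := (sum1 β hβ (-2 * π * β * t)).mul_left (Complex.exp (-π * β * t ^ 2))
  refine h.congr fun n => ?_
  rw [← Complex.exp_add]
  congr 1
  ring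

lemma sum_shift_r (β t : ℝ) (hβ : 0 < β) :
    Summable fun n : ℤ => Real.exp (-π * β * ((n : ℝ) + t) ^ 2) := by
  have h := (sum_shift_c β t hβ).norm
  refine h.congr fun n => ?_
  rw [Complex.norm_exp]
  congr 1
  have : (-π * β * ((n : ℂ) + t) ^ 2) = ((-π * β * ((n : ℝ) + t) ^ 2 : ℝ) : ℂ) := by
    push_cast; ring
  rw [this, Complex.ofReal_re]

lemma aux1 (β t : ℝ) (hβ : 0 < β) :
    ∑' n : ℤ, Complex.exp (-π * β * ((n : ℂ) + t) ^ 2) =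
      (Real.sqrt β : ℂ)⁻¹ *
        ∑' n : ℤ, Complex.exp (-π / β * n ^ 2 - 2 * π * Complex.I * t * n) := by
  have ha : (0 : ℝ) < ((β : ℂ)⁻¹).re := by
    rw [← Complex.ofReal_inv, Complex.ofReal_re]; positivity
  have key := Complex.tsum_exp_neg_quadratic ha (-Complex.I * t)
  have hsq : ((β : ℂ)⁻¹) ^ (1 / 2 : ℂ) = ((Real.sqrt β : ℝ) : ℂ)⁻¹ := by
    rw [← Complex.ofReal_inv, (by norm_num : (1 / 2 : ℂ) = ((1 / 2 : ℝ) : ℂ)),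
      ← Complex.ofReal_cpow (by positivity), ← Complex.ofReal_inv]
    norm_cast
    rw [← Real.sqrt_eq_rpow, Real.sqrt_inv]
  rw [hsq] at key
  have hβc : (Real.sqrt β : ℂ) ≠ 0 := by
    simpa using (Real.sqrt_ne_zero'.mpr hβ)
  rw [one_div, inv_inv] at key
  have key2 : ∑' n : ℤ, Complex.exp (-π / β * n ^ 2 - 2 * π * Complex.I * t * n) =
      (Real.sqrt β : ℂ) * ∑' n : ℤ, Complex.exp (-π * β * ((n : ℂ) + t) ^ 2) := by
    calc ∑' n : ℤ, Complex.exp (-π / β * n ^ 2 - 2 * π * Complex.I * t * n)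
        = ∑' n : ℤ, Complex.exp (-π * (β : ℂ)⁻¹ * n ^ 2 + 2 * π * (-Complex.I * t) * n) :=
          tsum_congr fun n => by congr 1; ring
      _ = (Real.sqrt β : ℂ) * ∑' n : ℤ,
            Complex.exp (-π / (β : ℂ)⁻¹ * (n + Complex.I * (-Complex.I * t)) ^ 2) := key
      _ = (Real.sqrt β : ℂ) * ∑' n : ℤ, Complex.exp (-π * β * ((n : ℂ) + t) ^ 2) := by
          rw [mul_right_inj' hβc]
          refine tsum_congr fun n => ?_
          congr 1
          have h3 : Complex.I * (-Complex.I * t) = (t : ℂ) := by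
            rw [show Complex.I * (-Complex.I * (t:ℂ)) = -(Complex.I * Complex.I) * t by ring,
              Complex.I_mul_I]
            ring
          rw [h3, div_eq_mul_inv, inv_inv]
  rw [key2, ← mul_assoc, inv_mul_cancel₀ hβc, one_mul]

lemma gauss_int (c : ℝ) (hc : 0 < c) : Summable fun m : ℤ => Real.exp (-π * c * (m : ℝ) ^ 2) := by
  refine (sum_shift_r c 0 hc).congr fun m => ?_
  norm_num

lemma gauss_c (c : ℝ) (hc : 0 < c) : Summable fun m : ℤ => Real.exp (-π * c * (m : ℝ) ^ 2) :=
  gauss_int c hc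

lemma main_id (x y a : ℝ) (hy : 0 < y) (ha : 0 < a) :
    ((∑' p : ℤ × ℤ, Real.exp (-(a * π / y) * (((p.1 : ℝ) * x + p.2) ^ 2 + ((p.1 : ℝ) * y) ^ 2)) : ℝ) : ℂ)
      = (Real.sqrt (y / a) : ℂ) *
        ∑' p : ℤ × ℤ, Complex.exp (-π * (a * y) * (p.1 : ℂ) ^ 2 - π * (y / a) * (p.2 : ℂ) ^ 2
          - 2 * π * Complex.I * x * ((p.1 : ℂ) * (p.2 : ℂ))) := by
  have hβ : 0 < a / y := div_pos ha hy
  have hyc : (y : ℂ) ≠ 0 := Complex.ofReal_ne_zero.mpr hy.ne'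
  have hac : (a : ℂ) ≠ 0 := Complex.ofReal_ne_zero.mpr ha.ne'
  -- pointwise factorization
  have hpt : ∀ m n : ℤ, Real.exp (-(a * π / y) * (((m : ℝ) * x + n) ^ 2 + ((m : ℝ) * y) ^ 2))
      = Real.exp (-π * (a * y) * (m : ℝ) ^ 2) * Real.exp (-π * (a / y) * ((n : ℝ) + m * x) ^ 2) := by
    intro m n
    rw [← Real.exp_add]
    congr 1
    field_simp
    ring
  -- inner summability
  have hinner : ∀ m : ℤ, Summable fun n : ℤ =>
      Real.exp (-(a * π / y) * (((m : ℝ) * x + n) ^ 2 + ((m : ℝ) * y) ^ 2)) := by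
    intro m
    refine ((sum_shift_r (a / y) ((m : ℝ) * x) hβ).mul_left
      (Real.exp (-π * (a * y) * (m : ℝ) ^ 2))).congr fun n => (hpt m n).symm
  -- summability of the dual 1-D Gaussian sums
  have hdual : ∀ m : ℤ, Summable fun n : ℤ =>
      Complex.exp (-(π:ℂ) / ((a / y : ℝ) : ℂ) * (n : ℂ) ^ 2
        - 2 * π * Complex.I * (((m : ℝ) * x : ℝ) : ℂ) * n) := by
    intro m
    refine (sum1 (y / a) (div_pos hy ha) (-2 * π * Complex.I * (((m : ℝ) * x : ℝ) : ℂ))).congr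
      fun n => ?_
    congr 1
    push_cast
    field_simp [hyc, hac]
    ring
  have hdualnorm : ∀ m : ℤ, ∀ n : ℤ,
      ‖Complex.exp (-(π:ℂ) / ((a / y : ℝ) : ℂ) * (n : ℂ) ^ 2
          - 2 * π * Complex.I * (((m : ℝ) * x : ℝ) : ℂ) * n)‖
        = Real.exp (-π * (y / a) * (n : ℝ) ^ 2) := by
    intro m n
    rw [Complex.norm_exp]
    congr 1
    have h5 : (-(π:ℂ) / ((a / y : ℝ) : ℂ) * (n : ℂ) ^ 2
          - 2 * π * Complex.I * (((m : ℝ) * x : ℝ) : ℂ) * n)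
        = ((-π * (y / a) * (n : ℝ) ^ 2 : ℝ) : ℂ) + ((-2 * π * ((m:ℝ) * x) * n : ℝ) : ℂ) * Complex.I := by
      push_cast
      field_simp [hyc, hac]
      ring
    rw [h5]
    simp only [Complex.add_re, Complex.mul_re, Complex.ofReal_re, Complex.ofReal_im,
      Complex.I_re, Complex.I_im]
    ring
  -- value of the inner sum
  have hval : ∀ m : ℤ, ((∑' n : ℤ, Real.exp (-(a * π / y) * (((m : ℝ) * x + n) ^ 2
        + ((m : ℝ) * y) ^ 2)) : ℝ) : ℂ)
      = (Real.sqrt (a / y) : ℂ)⁻¹ * ∑' n : ℤ,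
          (Real.exp (-π * (a * y) * (m : ℝ) ^ 2) : ℂ) *
          Complex.exp (-(π:ℂ) / ((a / y : ℝ) : ℂ) * (n : ℂ) ^ 2
            - 2 * π * Complex.I * (((m : ℝ) * x : ℝ) : ℂ) * n) := by
    intro m
    rw [Complex.ofReal_tsum]
    calc ∑' n : ℤ, (Real.exp (-(a * π / y) * (((m : ℝ) * x + n) ^ 2 + ((m : ℝ) * y) ^ 2)) : ℂ)
        = ∑' n : ℤ, (Real.exp (-π * (a * y) * (m : ℝ) ^ 2) : ℂ) *
            Complex.exp (-(π:ℂ) * ((a / y : ℝ) : ℂ) * ((n : ℂ) + (((m : ℝ) * x : ℝ) : ℂ)) ^ 2) := by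
          refine tsum_congr fun n => ?_
          rw [hpt m n, Complex.ofReal_mul, Complex.ofReal_exp, Complex.ofReal_exp]
          congr 2
          push_cast
          ring
      _ = (Real.exp (-π * (a * y) * (m : ℝ) ^ 2) : ℂ) *
            ∑' n : ℤ, Complex.exp (-(π:ℂ) * ((a / y : ℝ) : ℂ)
              * ((n : ℂ) + (((m : ℝ) * x : ℝ) : ℂ)) ^ 2) :=
          tsum_mul_left
      _ = (Real.sqrt (a / y) : ℂ)⁻¹ * ∑' n : ℤ,
            (Real.exp (-π * (a * y) * (m : ℝ) ^ 2) : ℂ) *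
            Complex.exp (-(π:ℂ) / ((a / y : ℝ) : ℂ) * (n : ℂ) ^ 2
              - 2 * π * Complex.I * (((m : ℝ) * x : ℝ) : ℂ) * n) := by
          rw [aux1 (a / y) ((m : ℝ) * x) hβ, tsum_mul_left]
          ring
  -- outer summability
  have hK : Summable fun n : ℤ => Real.exp (-π * (y / a) * (n : ℝ) ^ 2) :=
    gauss_int _ (div_pos hy ha)
  have hKnn : (0:ℝ) ≤ ∑' n : ℤ, Real.exp (-π * (y / a) * (n : ℝ) ^ 2) :=
    tsum_nonneg fun n => (Real.exp_pos _).le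
  have hay : (0:ℝ) < a * y := mul_pos ha hy
  have hnormdual : ∀ m : ℤ, Summable fun n : ℤ =>
      ‖(Real.exp (-π * (a * y) * (m : ℝ) ^ 2) : ℂ) *
        Complex.exp (-(π:ℂ) / ((a / y : ℝ) : ℂ) * (n : ℂ) ^ 2
        - 2 * π * Complex.I * (((m : ℝ) * x : ℝ) : ℂ) * n)‖ := by
    intro m
    refine (hK.mul_left (Real.exp (-π * (a * y) * (m : ℝ) ^ 2))).congr fun n => ?_
    rw [norm_mul, hdualnorm m n, Complex.norm_real, Real.norm_eq_abs,
      _root_.abs_of_nonneg (Real.exp_pos _).le]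
  have houter : Summable fun m : ℤ =>
      ∑' n : ℤ, Real.exp (-(a * π / y) * (((m : ℝ) * x + n) ^ 2 + ((m : ℝ) * y) ^ 2)) := by
    refine Summable.of_nonneg_of_le
      (fun m => tsum_nonneg fun n => (Real.exp_pos _).le) (fun m => ?_)
      ((gauss_int (a * y) hay).mul_left
        ((Real.sqrt (a / y))⁻¹ * ∑' n : ℤ, Real.exp (-π * (y / a) * (n : ℝ) ^ 2)))
    have h1 : ∑' n : ℤ, Real.exp (-(a * π / y) * (((m : ℝ) * x + n) ^ 2 + ((m : ℝ) * y) ^ 2))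
        = ‖((∑' n : ℤ, Real.exp (-(a * π / y) * (((m : ℝ) * x + n) ^ 2
            + ((m : ℝ) * y) ^ 2)) : ℝ) : ℂ)‖ := by
      rw [Complex.norm_real, Real.norm_eq_abs,
        _root_.abs_of_nonneg (tsum_nonneg fun n => (Real.exp_pos _).le)]
    rw [h1, hval m, norm_mul]
    have h2 : ‖((Real.sqrt (a / y) : ℝ) : ℂ)⁻¹‖ = (Real.sqrt (a / y))⁻¹ := by
      rw [norm_inv, Complex.norm_real, Real.norm_eq_abs, _root_.abs_of_nonneg (Real.sqrt_nonneg _)]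
    rw [h2]
    have h3 : ‖∑' n : ℤ, (Real.exp (-π * (a * y) * (m : ℝ) ^ 2) : ℂ) *
        Complex.exp (-(π:ℂ) / ((a / y : ℝ) : ℂ) * (n : ℂ) ^ 2
          - 2 * π * Complex.I * (((m : ℝ) * x : ℝ) : ℂ) * n)‖
        ≤ Real.exp (-π * (a * y) * (m : ℝ) ^ 2)
          * ∑' n : ℤ, Real.exp (-π * (y / a) * (n : ℝ) ^ 2) := by
      refine (norm_tsum_le_tsum_norm (hnormdual m)).trans (le_of_eq ?_)
      rw [← tsum_mul_left]
      refine tsum_congr fun n => ?_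
      rw [norm_mul, hdualnorm m n, Complex.norm_real, Real.norm_eq_abs,
        _root_.abs_of_nonneg (Real.exp_pos _).le]
    calc (Real.sqrt (a / y))⁻¹ * ‖∑' n : ℤ, (Real.exp (-π * (a * y) * (m : ℝ) ^ 2) : ℂ) *
          Complex.exp (-(π:ℂ) / ((a / y : ℝ) : ℂ) * (n : ℂ) ^ 2
            - 2 * π * Complex.I * (((m : ℝ) * x : ℝ) : ℂ) * n)‖
        ≤ (Real.sqrt (a / y))⁻¹ * (Real.exp (-π * (a * y) * (m : ℝ) ^ 2)
            * ∑' n : ℤ, Real.exp (-π * (y / a) * (n : ℝ) ^ 2)) :=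
          mul_le_mul_of_nonneg_left h3 (by positivity)
      _ = (Real.sqrt (a / y))⁻¹ * (∑' n : ℤ, Real.exp (-π * (y / a) * (n : ℝ) ^ 2))
            * Real.exp (-π * (a * y) * (m : ℝ) ^ 2) := by ring
  -- full 2-D summability (real)
  have hprod : Summable fun p : ℤ × ℤ =>
      Real.exp (-(a * π / y) * (((p.1 : ℝ) * x + p.2) ^ 2 + ((p.1 : ℝ) * y) ^ 2)) :=
    (summable_prod_of_nonneg fun p => (Real.exp_pos _).le).mpr ⟨hinner, houter⟩
  -- 2-D summability of the transformed (complex) series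
  have hGpt : ∀ p : ℤ × ℤ, ‖Complex.exp (-π * (a * y) * (p.1 : ℂ) ^ 2
      - π * (y / a) * (p.2 : ℂ) ^ 2 - 2 * π * Complex.I * x * ((p.1 : ℂ) * (p.2 : ℂ)))‖
      = Real.exp (-π * (a * y) * (p.1 : ℝ) ^ 2) * Real.exp (-π * (y / a) * (p.2 : ℝ) ^ 2) := by
    intro p
    rw [Complex.norm_exp, ← Real.exp_add]
    congr 1
    have h5 : (-π * (a * y) * (p.1 : ℂ) ^ 2 - π * (y / a) * (p.2 : ℂ) ^ 2
        - 2 * π * Complex.I * x * ((p.1 : ℂ) * (p.2 : ℂ)))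
        = ((-π * (a * y) * (p.1 : ℝ) ^ 2 + -π * (y / a) * (p.2 : ℝ) ^ 2 : ℝ) : ℂ)
          + ((-2 * π * x * ((p.1 : ℝ) * p.2) : ℝ) : ℂ) * Complex.I := by
      push_cast
      ring
    rw [h5]
    simp only [Complex.add_re, Complex.mul_re, Complex.ofReal_re, Complex.ofReal_im,
      Complex.I_re, Complex.I_im]
    ring
  have hG : Summable fun p : ℤ × ℤ =>
      Complex.exp (-π * (a * y) * (p.1 : ℂ) ^ 2 - π * (y / a) * (p.2 : ℂ) ^ 2
        - 2 * π * Complex.I * x * ((p.1 : ℂ) * (p.2 : ℂ))) := by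
    refine Summable.of_norm ?_
    refine ((gauss_int (a * y) hay).mul_of_nonneg hK
      (fun n => (Real.exp_pos _).le) (fun n => (Real.exp_pos _).le)).congr fun p => ?_
    exact (hGpt p).symm
  have hGinner : ∀ m : ℤ, Summable fun n : ℤ =>
      Complex.exp (-π * (a * y) * (m : ℂ) ^ 2 - π * (y / a) * (n : ℂ) ^ 2
        - 2 * π * Complex.I * x * ((m : ℂ) * (n : ℂ))) := by
    intro m
    refine Summable.of_norm ?_
    refine ((hK.mul_left (Real.exp (-π * (a * y) * (m : ℝ) ^ 2))).congr fun n => ?_)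
    exact (hGpt (m, n)).symm
  -- the main computation
  have hsqrt : (((Real.sqrt (a / y) : ℝ) : ℂ))⁻¹ = ((Real.sqrt (y / a) : ℝ) : ℂ) := by
    rw [← Complex.ofReal_inv, ← Real.sqrt_inv, inv_div]
  calc ((∑' p : ℤ × ℤ, Real.exp (-(a * π / y) * (((p.1 : ℝ) * x + p.2) ^ 2
          + ((p.1 : ℝ) * y) ^ 2)) : ℝ) : ℂ)
      = ((∑' m : ℤ, ∑' n : ℤ, Real.exp (-(a * π / y) * (((m : ℝ) * x + n) ^ 2
          + ((m : ℝ) * y) ^ 2)) : ℝ) : ℂ) := by rw [Summable.tsum_prod' hprod hinner]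
    _ = ∑' m : ℤ, ((∑' n : ℤ, Real.exp (-(a * π / y) * (((m : ℝ) * x + n) ^ 2
          + ((m : ℝ) * y) ^ 2)) : ℝ) : ℂ) := Complex.ofReal_tsum _
    _ = ∑' m : ℤ, (Real.sqrt (a / y) : ℂ)⁻¹ * ∑' n : ℤ,
          (Real.exp (-π * (a * y) * (m : ℝ) ^ 2) : ℂ) *
          Complex.exp (-(π:ℂ) / ((a / y : ℝ) : ℂ) * (n : ℂ) ^ 2
            - 2 * π * Complex.I * (((m : ℝ) * x : ℝ) : ℂ) * n) := tsum_congr hval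
    _ = (Real.sqrt (a / y) : ℂ)⁻¹ * ∑' m : ℤ, ∑' n : ℤ,
          (Real.exp (-π * (a * y) * (m : ℝ) ^ 2) : ℂ) *
          Complex.exp (-(π:ℂ) / ((a / y : ℝ) : ℂ) * (n : ℂ) ^ 2
            - 2 * π * Complex.I * (((m : ℝ) * x : ℝ) : ℂ) * n) := tsum_mul_left
    _ = (Real.sqrt (a / y) : ℂ)⁻¹ * ∑' m : ℤ, ∑' n : ℤ,
          Complex.exp (-π * (a * y) * (m : ℂ) ^ 2 - π * (y / a) * (n : ℂ) ^ 2
            - 2 * π * Complex.I * x * ((m : ℂ) * (n : ℂ))) := by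
        refine congrArg _ (tsum_congr fun m => tsum_congr fun n => ?_)
        rw [Complex.ofReal_exp, ← Complex.exp_add]
        congr 1
        push_cast
        field_simp [hyc, hac]
        ring
    _ = (Real.sqrt (a / y) : ℂ)⁻¹ * ∑' p : ℤ × ℤ,
          Complex.exp (-π * (a * y) * (p.1 : ℂ) ^ 2 - π * (y / a) * (p.2 : ℂ) ^ 2
            - 2 * π * Complex.I * x * ((p.1 : ℂ) * (p.2 : ℂ))) := by rw [Summable.tsum_prod' hG hGinner]
    _ = (Real.sqrt (y / a) : ℂ) * ∑' p : ℤ × ℤ,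
          Complex.exp (-π * (a * y) * (p.1 : ℂ) ^ 2 - π * (y / a) * (p.2 : ℂ) ^ 2
            - 2 * π * Complex.I * x * ((p.1 : ℂ) * (p.2 : ℂ))) := by rw [hsqrt]

lemma Gswap (x y α : ℝ) (hα : α ≠ 0) :
    ∑' p : ℤ × ℤ, Complex.exp (-π * ((1/α : ℝ) * y) * (p.1 : ℂ) ^ 2
        - π * (y / (1/α : ℝ)) * (p.2 : ℂ) ^ 2 - 2 * π * Complex.I * x * ((p.1 : ℂ) * (p.2 : ℂ)))
      = ∑' p : ℤ × ℤ, Complex.exp (-π * (α * y) * (p.1 : ℂ) ^ 2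
        - π * (y / α) * (p.2 : ℂ) ^ 2 - 2 * π * Complex.I * x * ((p.1 : ℂ) * (p.2 : ℂ))) := by
  have hac : (α : ℂ) ≠ 0 := Complex.ofReal_ne_zero.mpr hα
  calc ∑' p : ℤ × ℤ, Complex.exp (-π * ((1/α : ℝ) * y) * (p.1 : ℂ) ^ 2
        - π * (y / (1/α : ℝ)) * (p.2 : ℂ) ^ 2 - 2 * π * Complex.I * x * ((p.1 : ℂ) * (p.2 : ℂ)))
      = ∑' p : ℤ × ℤ, Complex.exp (-π * ((1/α : ℝ) * y) * (((Equiv.prodComm ℤ ℤ) p).1 : ℂ) ^ 2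
        - π * (y / (1/α : ℝ)) * (((Equiv.prodComm ℤ ℤ) p).2 : ℂ) ^ 2
        - 2 * π * Complex.I * x * ((((Equiv.prodComm ℤ ℤ) p).1 : ℂ)
          * (((Equiv.prodComm ℤ ℤ) p).2 : ℂ))) :=
        ((Equiv.prodComm ℤ ℤ).tsum_eq _).symm
    _ = ∑' p : ℤ × ℤ, Complex.exp (-π * (α * y) * (p.1 : ℂ) ^ 2
        - π * (y / α) * (p.2 : ℂ) ^ 2 - 2 * π * Complex.I * x * ((p.1 : ℂ) * (p.2 : ℂ))) := by
        refine tsum_congr fun p => ?_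
        congr 1
        push_cast
        field_simp
        simp only [Equiv.prodComm_apply, Prod.fst_swap, Prod.snd_swap]
        ring

/-- The two-dimensional theta function `θ(α; z) = Σ_{(m,n)∈ℤ²} exp(−(απ/y)|mz+n|²)`. -/
noncomputable def theta (α : ℝ) (z : ℂ) : ℝ :=
  ∑' p : ℤ × ℤ, Real.exp (-(α * π / z.im) * ‖(p.1 : ℂ) * z + (p.2 : ℂ)‖ ^ 2)

lemma theta_eq (a : ℝ) (z : ℂ) :
    theta a z = ∑' p : ℤ × ℤ, Real.exp (-(a * π / z.im)
      * (((p.1 : ℝ) * z.re + p.2) ^ 2 + ((p.1 : ℝ) * z.im) ^ 2)) := by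
  unfold theta
  refine tsum_congr fun p => ?_
  congr 2
  rw [Complex.sq_norm, Complex.normSq_apply]
  simp [Complex.add_re, Complex.add_im, Complex.mul_re, Complex.mul_im]
  ring

theorem theta_one_div (α : ℝ) (hα : 0 < α) (z : ℂ) (hz : 0 < z.im) :
    theta (1 / α) z = α * theta α z := by
  have h1 := main_id z.re z.im (1 / α) hz (by positivity)
  have h2 := main_id z.re z.im α hz hα
  rw [Gswap z.re z.im α hα.ne'] at h1
  have hsq : Real.sqrt (z.im / (1 / α)) = α * Real.sqrt (z.im / α) := by
    rw [show z.im / (1 / α) = (α * α) * (z.im / α) by field_simp,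
      Real.sqrt_mul (by positivity), Real.sqrt_mul_self hα.le]
  rw [← Complex.ofReal_inj]
  rw [theta_eq, theta_eq, Complex.ofReal_mul, h1, h2, hsq]
  push_cast
  ring
end

section
/- For any α > 0 and any z in the upper half plane ℍ, the theta function θ(α; z) is invariant under the transformations z ↦ z+1, z ↦ −1/z, and z ↦ −z̄ (conjugation composed with negation): θ(α; z+1) = θ(α; z), θ(α; −1/z) = θ(α; z), and θ(α; −z̄) = θ(α; z). -/
open Real

theorem theta_invariance (α : ℝ) (hα : 0 < α) (z : ℂ) (hz : 0 < z.im) :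
    theta α (z + 1) = theta α z ∧
    theta α (-1 / z) = theta α z ∧
    theta α (-(starRingEnd ℂ z)) = theta α z := by
  have hz0 : z ≠ 0 := fun h => by simp [h] at hz
  have hzim : z.im ≠ 0 := ne_of_gt hz
  have habs : ‖z‖ ≠ 0 := norm_ne_zero_iff.mpr hz0
  set f : ℤ × ℤ → ℝ :=
    fun p => Real.exp (-(α * π / z.im) * ‖(p.1 : ℂ) * z + (p.2 : ℂ)‖ ^ 2) with hf
  refine ⟨?_, ?_, ?_⟩
  · -- z ↦ z + 1
    let e : ℤ × ℤ ≃ ℤ × ℤ :=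
      ⟨fun p => (p.1, p.1 + p.2), fun p => (p.1, p.2 - p.1),
        fun p => by simp, fun p => by simp⟩
    unfold theta
    rw [← Equiv.tsum_eq e f]
    apply tsum_congr
    intro p
    show Real.exp (-(α * π / (z + 1).im) * ‖(p.1 : ℂ) * (z + 1) + (p.2 : ℂ)‖ ^ 2)
      = Real.exp (-(α * π / z.im) * ‖((p.1 : ℤ) : ℂ) * z + ((p.1 + p.2 : ℤ) : ℂ)‖ ^ 2)
    congr 2
    · simp
    · congr 1
      push_cast
      ring
  · -- z ↦ -1/z
    let e : ℤ × ℤ ≃ ℤ × ℤ :=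
      ⟨fun p => (p.2, -p.1), fun p => (-p.2, p.1),
        fun p => by simp, fun p => by simp⟩
    unfold theta
    rw [← Equiv.tsum_eq e f]
    apply tsum_congr
    intro p
    show Real.exp (-(α * π / (-1 / z).im) * ‖(p.1 : ℂ) * (-1 / z) + (p.2 : ℂ)‖ ^ 2)
      = Real.exp (-(α * π / z.im) * ‖((p.2 : ℤ) : ℂ) * z + ((-p.1 : ℤ) : ℂ)‖ ^ 2)
    congr 1
    have him : (-1 / z).im = z.im / (‖z‖) ^ 2 := by
      rw [div_eq_mul_inv, neg_one_mul, Complex.neg_im, Complex.inv_im, Complex.normSq_eq_norm_sq]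
      ring
    have hval : (p.1 : ℂ) * (-1 / z) + (p.2 : ℂ) = ((p.2 : ℂ) * z + ((-p.1 : ℤ) : ℂ)) / z := by
      field_simp
      push_cast
      ring
    rw [him, hval, norm_div, div_pow]
    rw [Complex.norm_def] -- maybe not needed
    rw [← Complex.norm_def]
    field_simp
    try ring
  · -- z ↦ -conj z
    let e : ℤ × ℤ ≃ ℤ × ℤ :=
      ⟨fun p => (-p.1, p.2), fun p => (-p.1, p.2),
        fun p => by simp, fun p => by simp⟩
    unfold theta
    rw [← Equiv.tsum_eq e f]
    apply tsum_congr
    intro p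
    show Real.exp (-(α * π / (-(starRingEnd ℂ z)).im) *
        ‖(p.1 : ℂ) * (-(starRingEnd ℂ z)) + (p.2 : ℂ)‖ ^ 2)
      = Real.exp (-(α * π / z.im) * ‖((-p.1 : ℤ) : ℂ) * z + ((p.2 : ℤ) : ℂ)‖ ^ 2)
    have him : (-(starRingEnd ℂ z)).im = z.im := by simp
    have hval : (p.1 : ℂ) * (-(starRingEnd ℂ z)) + (p.2 : ℂ)
        = starRingEnd ℂ (((-p.1 : ℤ) : ℂ) * z + ((p.2 : ℤ) : ℂ)) := by
      push_cast
      simp [map_mul]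
      try ring
    rw [him, hval, Complex.norm_conj]
end

section
/- For z = x + iy in the upper half plane and α > 0, the theta function admits the exponential expansion θ(α; z) = 2√(y/α) Σ_{n=1}^∞ e^{−απyn²} ϑ(y/α; nx) + √(y/α) ϑ(y/α; 0), where ϑ(X;Y) = Σ_{n∈ℤ} e^{−πn²X} e^{2πinY} is the one-dimensional theta function. -/
open Real

/-- The one-dimensional theta function `ϑ(X;Y) = Σ_{n∈ℤ} e^{−πn²X} e^{2πinY}` (real-valued). -/
noncomputable def theta1 (X Y : ℝ) : ℝ :=
  ∑' n : ℤ, Real.exp (-π * (n : ℝ) ^ 2 * X) * Real.cos (2 * π * (n : ℝ) * Y)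

section Helpers
open Complex

set_option maxHeartbeats 800000

lemma summable_gauss_shift {a : ℝ} (ha : 0 < a) (c : ℝ) :
    Summable fun n : ℤ => rexp (-π * a * ((n : ℝ) + c) ^ 2) := by
  have h : Summable (jacobiTheta₂_term · (Complex.I * a * c) (Complex.I * a)) :=
    (summable_jacobiTheta₂_term_iff _ _).mpr (by simp [ha])
  have h2 : Summable fun n : ℤ => ‖jacobiTheta₂_term n (Complex.I * a * c) (Complex.I * a)‖ :=
    summable_norm_iff.mpr h
  have h3 := h2.mul_right (rexp (-π * a * c ^ 2))
  refine h3.congr fun n => ?_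
  rw [norm_jacobiTheta₂_term, ← Real.exp_add]
  congr 1
  simp only [Complex.mul_im, Complex.I_re, Complex.I_im, Complex.ofReal_re, Complex.ofReal_im]
  ring

lemma summable_gauss {a : ℝ} (ha : 0 < a) :
    Summable fun n : ℤ => rexp (-π * a * ((n : ℝ)) ^ 2) :=
  (summable_gauss_shift ha 0).congr fun n => by rw [add_zero]

lemma summable_theta1 {X : ℝ} (hX : 0 < X) (Y : ℝ) :
    Summable fun n : ℤ => rexp (-π * (n : ℝ) ^ 2 * X) * Real.cos (2 * π * (n : ℝ) * Y) := by
  refine (summable_gauss hX).of_norm_bounded fun n => ?_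
  rw [norm_mul, Real.norm_eq_abs, Real.norm_eq_abs, Real.abs_exp]
  calc rexp (-π * (n:ℝ)^2 * X) * |Real.cos (2*π*n*Y)|
      ≤ rexp (-π * (n:ℝ)^2 * X) * 1 :=
        mul_le_mul_of_nonneg_left (Real.abs_cos_le_one _) (Real.exp_nonneg _)
    _ = rexp (-π * X * (n:ℝ)^2) := by rw [mul_one]; ring_nf

lemma theta1_le {X : ℝ} (hX : 0 < X) (Y : ℝ) :
    theta1 X Y ≤ ∑' n : ℤ, rexp (-π * X * ((n : ℝ)) ^ 2) := by
  refine Summable.tsum_le_tsum (fun n => ?_) (summable_theta1 hX Y) (summable_gauss hX)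
  calc rexp (-π * (n:ℝ)^2 * X) * Real.cos (2*π*n*Y)
      ≤ rexp (-π * (n:ℝ)^2 * X) * 1 :=
        mul_le_mul_of_nonneg_left (Real.cos_le_one _) (Real.exp_nonneg _)
    _ = rexp (-π * X * (n:ℝ)^2) := by rw [mul_one]; ring_nf

lemma exp_pair (u v : ℝ) :
    Complex.exp ((u:ℂ)) * (Complex.exp ((v:ℂ) * Complex.I) + Complex.exp (-((v:ℂ) * Complex.I)))
      = 2 * ((rexp u * Real.cos v : ℝ) : ℂ) := by
  have h : -((v:ℂ) * Complex.I) = (-(v:ℂ)) * Complex.I := by ring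
  rw [h, Complex.ofReal_mul, Complex.ofReal_exp, Complex.ofReal_cos, Complex.cos]
  have h2 : -(v:ℂ) = ((-v : ℝ) : ℂ) := by push_cast; ring
  ring

/-- Poisson summation for the shifted Gaussian. -/
lemma gauss_shift_tsum {a : ℝ} (ha : 0 < a) (c : ℝ) :
    ∑' n : ℤ, rexp (-π * a * ((n : ℝ) + c) ^ 2)
      = (1 / Real.sqrt a) * theta1 (1 / a) c := by
  have ha' : (0:ℝ) < 1 / a := by positivity
  set F : ℤ → ℂ := fun n =>
    Complex.exp (((-π * (1/a) * (n:ℝ)^2 : ℝ) : ℂ) + ((2*π*(n:ℝ)*c : ℝ) : ℂ) * Complex.I) with hF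
  have hFsum : Summable F := by
    refine Summable.of_norm ((summable_gauss ha').congr fun n => ?_)
    simp only [hF]
    simp only [Complex.norm_exp, Complex.add_re, Complex.ofReal_re,
      Complex.mul_I_re, Complex.ofReal_im]
    congr 1
    ring
  have hFneg : ∀ n : ℤ, F n + F (-n) = 2 * ((rexp (-π * (1/a) * (n:ℝ)^2) *
      Real.cos (2 * π * (n:ℝ) * c) : ℝ) : ℂ) := by
    intro n
    have h1 : F n = Complex.exp ((-π * (1/a) * (n:ℝ)^2 : ℝ) : ℂ) *
        Complex.exp (((2 * π * (n:ℝ) * c : ℝ) : ℂ) * Complex.I) := by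
      simp only [hF]; rw [← Complex.exp_add]
    have h2 : F (-n) = Complex.exp ((-π * (1/a) * (n:ℝ)^2 : ℝ) : ℂ) *
        Complex.exp (-(((2 * π * (n:ℝ) * c : ℝ) : ℂ) * Complex.I)) := by
      simp only [hF]; rw [← Complex.exp_add]
      congr 1
      push_cast
      ring
    rw [h1, h2, ← mul_add, exp_pair]
  have hS : ∑' n : ℤ, F n = ((theta1 (1/a) c : ℝ) : ℂ) := by
    have hneg : ∑' n : ℤ, F (-n) = ∑' n : ℤ, F n := (Equiv.neg ℤ).tsum_eq F
    have hFnegsum : Summable fun n : ℤ => F (-n) := (Equiv.neg ℤ).summable_iff.mpr hFsum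
    have h2 : (2:ℂ) * ∑' n : ℤ, F n = ∑' n : ℤ, (F n + F (-n)) := by
      rw [Summable.tsum_add hFsum hFnegsum, hneg]; ring
    rw [funext hFneg, tsum_mul_left, ← Complex.ofReal_tsum] at h2
    have h3 : ∑' n : ℤ, rexp (-π * (1/a) * (n:ℝ)^2) * Real.cos (2 * π * (n:ℝ) * c)
        = theta1 (1/a) c := by
      rw [theta1]
      congr 1
      funext n
      congr 2
      ring
    rw [h3] at h2
    exact mul_left_cancel₀ (two_ne_zero' ℂ) h2
  have key := Complex.tsum_exp_neg_quadratic (a := (a : ℂ))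
    (by rwa [Complex.ofReal_re]) (-((a : ℂ) * (c : ℂ)))
  have hLHS : ∑' n : ℤ, Complex.exp (-(π:ℂ) * a * (n:ℂ) ^ 2 + 2 * π * (-((a:ℂ) * (c:ℂ))) * n)
      = ((∑' n : ℤ, rexp (-π * a * ((n : ℝ) + c) ^ 2) : ℝ) : ℂ)
        * Complex.exp (((π * a * c^2 : ℝ) : ℂ)) := by
    rw [Complex.ofReal_tsum, ← tsum_mul_right]
    refine tsum_congr fun n => ?_
    rw [Complex.ofReal_exp, ← Complex.exp_add]
    congr 1
    push_cast; ring
  have hRHS : ∑' n : ℤ,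
        Complex.exp (-(π:ℂ) / a * ((n:ℂ) + Complex.I * (-((a:ℂ) * (c:ℂ)))) ^ 2)
      = ((theta1 (1/a) c : ℝ) : ℂ) * Complex.exp (((π * a * c^2 : ℝ) : ℂ)) := by
    rw [← hS, ← tsum_mul_right]
    refine tsum_congr fun n => ?_
    simp only [hF]; rw [← Complex.exp_add]
    congr 1
    have hane : (a:ℂ) ≠ 0 := Complex.ofReal_ne_zero.mpr ha.ne'
    push_cast
    field_simp
    ring_nf
    rw [Complex.I_sq]
    ring
  rw [hLHS, hRHS] at key
  have hsqrt : (1 / (a:ℂ) ^ (1/2 : ℂ)) = ((1 / Real.sqrt a : ℝ) : ℂ) := by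
    rw [Real.sqrt_eq_rpow, Complex.ofReal_div, Complex.ofReal_one,
      Complex.ofReal_cpow ha.le]
    norm_num
  rw [hsqrt] at key
  have key2 : ((∑' n : ℤ, rexp (-π * a * ((n : ℝ) + c) ^ 2) : ℝ) : ℂ)
        * Complex.exp (((π * a * c^2 : ℝ) : ℂ))
      = (((1 / Real.sqrt a) * theta1 (1/a) c : ℝ) : ℂ)
        * Complex.exp (((π * a * c^2 : ℝ) : ℂ)) := by
    rw [key]; push_cast; ring
  exact_mod_cast mul_right_cancel₀ (Complex.exp_ne_zero _) key2


lemma theta1_neg (X Y : ℝ) : theta1 X (-Y) = theta1 X Y := by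
  unfold theta1
  exact tsum_congr fun n => by rw [mul_neg, Real.cos_neg]


end Helpers

set_option maxHeartbeats 800000 in
theorem theta_exponential_expansion (α x y : ℝ) (hα : 0 < α) (hy : 0 < y) :
    theta α (⟨x, y⟩ : ℂ) =
      2 * Real.sqrt (y / α) *
          (∑' n : ℕ, Real.exp (-α * π * y * ((n : ℝ) + 1) ^ 2) * theta1 (y / α) (((n : ℝ) + 1) * x))
        + Real.sqrt (y / α) * theta1 (y / α) 0 := by
  have ha1 : (0:ℝ) < α * y := by positivity
  have ha2 : (0:ℝ) < α / y := by positivity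
  have ha3 : (0:ℝ) < y / α := by positivity
  have hXeq : 1 / (α / y) = y / α := one_div_div α y
  have hsqrt : 1 / Real.sqrt (α / y) = Real.sqrt (y / α) := by
    rw [one_div, ← Real.sqrt_inv, inv_div]
  -- the summand in product form
  set f : ℤ → ℤ → ℝ := fun m n =>
    rexp (-π * (α * y) * (m : ℝ) ^ 2) * rexp (-π * (α / y) * ((n : ℝ) + (m : ℝ) * x) ^ 2)
    with hf
  have hterm : ∀ m n : ℤ,
      rexp (-(α * π / (⟨x, y⟩ : ℂ).im) * ‖(m : ℂ) * (⟨x, y⟩ : ℂ) + (n : ℂ)‖ ^ 2)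
        = f m n := by
    intro m n
    simp only [hf]
    rw [← Real.exp_add]
    congr 1
    rw [Complex.sq_norm, Complex.normSq_apply]
    have him : (⟨x, y⟩ : ℂ).im = y := rfl
    have hre : ((m : ℂ) * (⟨x, y⟩ : ℂ) + (n : ℂ)).re = (m : ℝ) * x + (n : ℝ) := by
      simp [Complex.add_re, Complex.mul_re]
    have him2 : ((m : ℂ) * (⟨x, y⟩ : ℂ) + (n : ℂ)).im = (m : ℝ) * y := by
      simp [Complex.add_im, Complex.mul_im]
    rw [hre, him2]
    field_simp
    ring
  -- summability
  have hrow : ∀ m : ℤ, Summable fun n : ℤ => f m n := fun m =>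
    ((summable_gauss_shift ha2 ((m : ℝ) * x))).mul_left _
  have hrowsum : ∀ m : ℤ, ∑' n : ℤ, f m n
      = rexp (-π * (α * y) * (m : ℝ) ^ 2) *
        (Real.sqrt (y / α) * theta1 (y / α) ((m : ℝ) * x)) := by
    intro m
    rw [hf]
    rw [tsum_mul_left, gauss_shift_tsum ha2, hXeq, hsqrt]
  have hsumrows : Summable fun m : ℤ => ∑' n : ℤ, f m n := by
    refine Summable.of_nonneg_of_le
      (fun m => tsum_nonneg fun n => by positivity)
      (fun m => ?_)
      (((summable_gauss ha1)).mul_right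
        (Real.sqrt (y / α) * ∑' n : ℤ, rexp (-π * (y / α) * (n : ℝ) ^ 2)))
    rw [hrowsum m, ← mul_assoc, mul_assoc]
    refine mul_le_mul_of_nonneg_left ?_ (Real.exp_nonneg _)
    exact mul_le_mul_of_nonneg_left (theta1_le ha3 _) (Real.sqrt_nonneg _)
  have hsum : Summable fun p : ℤ × ℤ => f p.1 p.2 := by
    refine (summable_prod_of_nonneg fun p => by simp only [hf]; positivity).mpr
      ⟨hrow, hsumrows⟩
  -- rewrite theta as iterated sum
  have htheta : theta α (⟨x, y⟩ : ℂ) = ∑' m : ℤ, ∑' n : ℤ, f m n := by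
    rw [theta]
    rw [tsum_congr fun p : ℤ × ℤ => hterm p.1 p.2]
    exact Summable.tsum_prod' hsum hrow
  set G : ℤ → ℝ := fun m =>
    rexp (-π * (α * y) * (m : ℝ) ^ 2) * (Real.sqrt (y / α) * theta1 (y / α) ((m : ℝ) * x))
    with hG
  have hGsum : Summable G := hsumrows.congr fun m => hrowsum m
  have htheta2 : theta α (⟨x, y⟩ : ℂ) = ∑' m : ℤ, G m := by
    rw [htheta]; exact tsum_congr hrowsum
  -- split the integer sum
  have hinj1 : Function.Injective fun n : ℕ => (n : ℤ) + 1 := by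
    intro a b h; simpa using h
  have hinj2 : Function.Injective fun n : ℕ => -((n : ℤ) + 1) := by
    intro a b h; simpa using h
  have hs1 : Summable fun n : ℕ => G ((n : ℤ) + 1) := hGsum.comp_injective hinj1
  have hs2 : Summable fun n : ℕ => G (-((n : ℤ) + 1)) := hGsum.comp_injective hinj2
  have hsplit := tsum_of_add_one_of_neg_add_one hs1 hs2
  have hGeven : ∀ n : ℕ, G (-((n : ℤ) + 1)) = G ((n : ℤ) + 1) := by
    intro n
    simp only [hG]
    push_cast
    rw [neg_sq, ← theta1_neg (y/α) (((n:ℝ)+1) * x)]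
    ring_nf
  have hG0 : G 0 = Real.sqrt (y / α) * theta1 (y / α) 0 := by
    simp only [hG]
    norm_num
  have hpos : ∑' n : ℕ, G ((n : ℤ) + 1)
      = Real.sqrt (y / α) *
        ∑' n : ℕ, rexp (-α * π * y * ((n : ℝ) + 1) ^ 2) * theta1 (y / α) (((n : ℝ) + 1) * x) := by
    rw [← tsum_mul_left]
    refine tsum_congr fun n => ?_
    simp only [hG]
    push_cast
    ring_nf
  rw [htheta2, hsplit, funext hGeven, hpos, hG0]
  ring
end

section
/- Let X > 1/5 and Y ∈ ℝ with sin(2πY) > 0. Then −4πe^{−πX}(1+μ(X))·sin(2πY) ≤ ∂ϑ(X;Y)/∂Y ≤ −4πe^{−πX}(1−μ(X))·sin(2πY), where μ(X) = Σ_{n=2}^∞ n² e^{−π(n²−1)X}. -/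
open Real


lemma abs_sin_nat_mul_le' (x : ℝ) : ∀ n : ℕ, |Real.sin (n * x)| ≤ n * |Real.sin x| := by
  intro n
  induction n with
  | zero => simp
  | succ k ih =>
    have h : ((k + 1 : ℕ) : ℝ) * x = k * x + x := by push_cast; ring
    rw [h, Real.sin_add]
    have h1 : |Real.sin (k * x) * Real.cos x + Real.cos (k * x) * Real.sin x|
        ≤ |Real.sin (k * x)| + |Real.sin x| := by
      refine (abs_add_le _ _).trans ?_
      rw [abs_mul, abs_mul]
      have := Real.abs_cos_le_one x
      have := Real.abs_cos_le_one (k * x)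
      nlinarith [abs_nonneg (Real.sin (k * x)), abs_nonneg (Real.sin x)]
    push_cast
    nlinarith [ih]

section aux
variable {X : ℝ}

lemma exp_sq_le_pow (hX : 0 < X) (n : ℕ) : Real.exp (-π * (n : ℝ) ^ 2 * X) ≤ Real.exp (-π * X) ^ n := by
  rw [← Real.exp_nat_mul]
  apply Real.exp_le_exp.2
  have hn : (n : ℝ) ≤ (n : ℝ) ^ 2 := by
    exact_mod_cast Nat.le_self_pow two_ne_zero n
  nlinarith [mul_pos pi_pos hX]

lemma summable_exp_sq (hX : 0 < X) : Summable fun n : ℕ => Real.exp (-π * (n : ℝ) ^ 2 * X) := by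
  refine Summable.of_nonneg_of_le (fun n => (Real.exp_pos _).le) (fun n => exp_sq_le_pow hX n) ?_
  exact summable_geometric_of_lt_one (Real.exp_pos _).le
    (Real.exp_lt_one_iff.2 (by nlinarith [pi_pos]))

lemma summable_n_exp_sq (hX : 0 < X) : Summable fun n : ℕ => (n : ℝ) * Real.exp (-π * (n : ℝ) ^ 2 * X) := by
  have hr : ‖Real.exp (-π * X)‖ < 1 := by
    rw [Real.norm_eq_abs, abs_of_pos (Real.exp_pos _)]
    exact Real.exp_lt_one_iff.2 (by nlinarith [pi_pos])
  have h := summable_pow_mul_geometric_of_norm_lt_one (R := ℝ) 1 hr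
  refine Summable.of_nonneg_of_le (fun n => by positivity) (fun n => ?_)
    (h.congr fun n => by rw [pow_one])
  exact mul_le_mul_of_nonneg_left (exp_sq_le_pow hX n) (Nat.cast_nonneg n)

lemma summable_sq_exp_sq (hX : 0 < X) : Summable fun n : ℕ => (n : ℝ) ^ 2 * Real.exp (-π * (n : ℝ) ^ 2 * X) := by
  have hr : ‖Real.exp (-π * X)‖ < 1 := by
    rw [Real.norm_eq_abs, abs_of_pos (Real.exp_pos _)]
    exact Real.exp_lt_one_iff.2 (by nlinarith [pi_pos])
  have h := summable_pow_mul_geometric_of_norm_lt_one (R := ℝ) 2 hr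
  refine Summable.of_nonneg_of_le (fun n => by positivity) (fun n => ?_) h
  exact mul_le_mul_of_nonneg_left (exp_sq_le_pow hX n) (by positivity)

lemma summable_mu (hX : 0 < X) : Summable fun n : ℕ =>
    ((n : ℝ) + 2) ^ 2 * Real.exp (-π * (((n : ℝ) + 2) ^ 2 - 1) * X) := by
  have h1 : Summable fun n : ℕ =>
      (((n + 2 : ℕ)) : ℝ) ^ 2 * Real.exp (-π * (((n + 2 : ℕ)) : ℝ) ^ 2 * X) :=
    (summable_nat_add_iff 2).2 (summable_sq_exp_sq hX)
  have h2 := h1.mul_right (Real.exp (π * X))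
  refine h2.congr fun n => ?_
  push_cast
  rw [mul_assoc, ← Real.exp_add]
  ring_nf


end aux

/-- `μ(X) = Σ_{n=2}^∞ n² e^{−π(n²−1)X}`. -/
noncomputable def mu (X : ℝ) : ℝ :=
  ∑' n : ℕ, ((n : ℝ) + 2) ^ 2 * Real.exp (-π * (((n : ℝ) + 2) ^ 2 - 1) * X)

theorem deriv_theta1_bounds (X Y : ℝ) (hX : 1 / 5 < X) (hY : 0 < Real.sin (2 * π * Y)) :
    -(4 * π * Real.exp (-π * X) * (1 + mu X)) * Real.sin (2 * π * Y)
        ≤ deriv (fun y => theta1 X y) Y ∧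
    deriv (fun y => theta1 X y) Y
        ≤ -(4 * π * Real.exp (-π * X) * (1 - mu X)) * Real.sin (2 * π * Y) := by
  have hX0 : 0 < X := by linarith
  set g : ℤ → ℝ → ℝ := fun n y =>
    Real.exp (-π * (n : ℝ) ^ 2 * X) * Real.cos (2 * π * (n : ℝ) * y) with hg_def
  set g' : ℤ → ℝ → ℝ := fun n y =>
    Real.exp (-π * (n : ℝ) ^ 2 * X) * (-Real.sin (2 * π * (n : ℝ) * y) * (2 * π * (n : ℝ)))
    with hg'_def
  set u : ℤ → ℝ := fun n =>
    Real.exp (-π * (n : ℝ) ^ 2 * X) * (2 * π * |(n : ℝ)|) with hu_def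
  -- derivative of each term
  have hg : ∀ (n : ℤ) (y : ℝ), HasDerivAt (g n) (g' n y) y := by
    intro n y
    have h1 : HasDerivAt (fun y : ℝ => 2 * π * (n : ℝ) * y) (2 * π * (n : ℝ)) y := by
      simpa using (hasDerivAt_id y).const_mul (2 * π * (n : ℝ))
    exact (h1.cos).const_mul _
  -- summability of the bound u
  have hunat : Summable fun n : ℕ => u n := by
    have := (summable_n_exp_sq hX0).mul_left (2 * π)
    refine this.congr fun n => ?_
    simp [hu_def, abs_of_nonneg (Nat.cast_nonneg (α := ℝ) n)]
    ring
  have hu : Summable u := by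
    refine Summable.of_nat_of_neg hunat (hunat.congr fun n => ?_)
    simp [hu_def]
  -- bound on derivatives
  have hg' : ∀ (n : ℤ) (y : ℝ), ‖g' n y‖ ≤ u n := by
    intro n y
    rw [Real.norm_eq_abs, hg'_def, hu_def]
    simp only
    rw [abs_mul, abs_of_pos (Real.exp_pos _)]
    refine mul_le_mul_of_nonneg_left ?_ (Real.exp_pos _).le
    rw [abs_mul, abs_neg, abs_mul, abs_mul]
    have h1 := Real.abs_sin_le_one (2 * π * (n : ℝ) * y)
    have h2 := abs_nonneg ((n : ℝ))
    have h3 : |(2 : ℝ)| = 2 := by norm_num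
    have h4 : |π| = π := abs_of_pos pi_pos
    rw [h3, h4]
    exact mul_le_of_le_one_left (by positivity) h1
  -- summability of g at Y
  have hEnat : Summable fun n : ℕ => Real.exp (-π * ((n : ℤ) : ℝ) ^ 2 * X) := by
    refine (summable_exp_sq hX0).congr fun n => ?_
    norm_num
  have hE : Summable fun n : ℤ => Real.exp (-π * (n : ℝ) ^ 2 * X) := by
    refine Summable.of_nat_of_neg hEnat (hEnat.congr fun n => ?_)
    push_cast
    ring_nf
  have hg0 : Summable fun n : ℤ => g n Y := by
    refine Summable.of_norm_bounded hE fun n => ?_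
    rw [Real.norm_eq_abs, abs_mul, abs_of_pos (Real.exp_pos _)]
    exact mul_le_of_le_one_right (Real.exp_pos _).le (Real.abs_cos_le_one _)
  -- derivative of the sum
  have HD : HasDerivAt (fun y => theta1 X y) (∑' n : ℤ, g' n Y) Y := by
    have := hasDerivAt_tsum (y₀ := Y) hu hg hg' hg0 Y
    exact this
  have hderiv : deriv (fun y => theta1 X y) Y = ∑' n : ℤ, g' n Y := HD.deriv
  -- summability of g' at Y over ℕ and shifts
  have hs1 : Summable fun n : ℕ => g' (n : ℤ) Y := by
    refine Summable.of_norm_bounded hunat fun n => hg' (n : ℤ) Y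
  have heven : ∀ n : ℤ, g' (-n) Y = g' n Y := by
    intro n
    simp only [hg'_def, Int.cast_neg, neg_mul, mul_neg, Real.sin_neg]
    ring
  -- split the ℤ-sum
  have hs2 : Summable fun n : ℕ => g' (-((n : ℤ) + 1)) Y := by
    refine ((summable_nat_add_iff 1).2 hs1).congr fun n => ?_
    rw [heven]
    push_cast
    ring_nf
  have hsplit : (∑' n : ℤ, g' n Y)
      = (∑' n : ℕ, g' (n : ℤ) Y) + ∑' n : ℕ, g' (-((n : ℤ) + 1)) Y :=
    tsum_of_nat_of_neg_add_one hs1 hs2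
  have hshift1 : Summable fun n : ℕ => g' ((n : ℤ) + 1) Y := by
    refine ((summable_nat_add_iff 1).2 hs1).congr fun n => ?_
    push_cast
    ring_nf
  have hneg_eq : (∑' n : ℕ, g' (-((n : ℤ) + 1)) Y) = ∑' n : ℕ, g' ((n : ℤ) + 1) Y := by
    refine tsum_congr fun n => heven _
  have hzero : g' 0 Y = 0 := by simp [hg'_def]
  have hnat_eq : (∑' n : ℕ, g' (n : ℤ) Y) = ∑' n : ℕ, g' ((n : ℤ) + 1) Y := by
    rw [Summable.tsum_eq_zero_add hs1]
    simp only [Nat.cast_zero, hzero, zero_add]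
    refine tsum_congr fun n => by push_cast; ring_nf
  have hshift2 : Summable fun n : ℕ => g' ((n : ℤ) + 2) Y := by
    refine ((summable_nat_add_iff 1).2 hshift1).congr fun n => ?_
    push_cast
    ring_nf
  have hT : (∑' n : ℕ, g' ((n : ℤ) + 1) Y) = g' 1 Y + ∑' n : ℕ, g' ((n : ℤ) + 2) Y := by
    rw [Summable.tsum_eq_zero_add hshift1]
    norm_num
    refine tsum_congr fun n => by push_cast; ring_nf
  set T' : ℝ := ∑' n : ℕ, g' ((n : ℤ) + 2) Y with hT'_def
  -- pointwise bound for the tail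
  have htail : ∀ n : ℕ, ‖g' ((n : ℤ) + 2) Y‖ ≤
      (2 * π * Real.exp (-π * X) * Real.sin (2 * π * Y)) *
        (((n : ℝ) + 2) ^ 2 * Real.exp (-π * (((n : ℝ) + 2) ^ 2 - 1) * X)) := by
    intro n
    have hsin : |Real.sin (2 * π * (((n : ℤ) + 2 : ℤ) : ℝ) * Y)|
        ≤ ((n : ℝ) + 2) * Real.sin (2 * π * Y) := by
      have h := abs_sin_nat_mul_le' (2 * π * Y) (n + 2)
      have hcast : 2 * π * (((n : ℤ) + 2 : ℤ) : ℝ) * Y = ((n + 2 : ℕ) : ℝ) * (2 * π * Y) := by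
        push_cast; ring
      rw [hcast]
      calc |Real.sin (((n + 2 : ℕ) : ℝ) * (2 * π * Y))|
          ≤ ((n + 2 : ℕ) : ℝ) * |Real.sin (2 * π * Y)| := h
        _ = ((n : ℝ) + 2) * Real.sin (2 * π * Y) := by
            rw [abs_of_pos hY]; push_cast; ring
    have hexp : Real.exp (-π * (((n : ℤ) + 2 : ℤ) : ℝ) ^ 2 * X)
        = Real.exp (-π * X) * Real.exp (-π * (((n : ℝ) + 2) ^ 2 - 1) * X) := by
      rw [← Real.exp_add]
      congr 1
      push_cast
      ring
    rw [Real.norm_eq_abs, hg'_def]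
    simp only
    rw [abs_mul, abs_of_pos (Real.exp_pos _), abs_mul, abs_neg]
    rw [hexp]
    have h2pin : |2 * π * (((n : ℤ) + 2 : ℤ) : ℝ)| = 2 * π * ((n : ℝ) + 2) := by
      rw [abs_of_pos]
      · push_cast; ring
      · push_cast
        positivity
    rw [h2pin]
    have e1 := Real.exp_pos (-π * X)
    have e2 := Real.exp_pos (-π * (((n : ℝ) + 2) ^ 2 - 1) * X)
    have hn2 : (0:ℝ) < (n : ℝ) + 2 := by positivity
    calc Real.exp (-π * X) * Real.exp (-π * (((n : ℝ) + 2) ^ 2 - 1) * X) *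
          (|Real.sin (2 * π * (((n : ℤ) + 2 : ℤ) : ℝ) * Y)| * (2 * π * ((n : ℝ) + 2)))
        ≤ Real.exp (-π * X) * Real.exp (-π * (((n : ℝ) + 2) ^ 2 - 1) * X) *
          ((((n : ℝ) + 2) * Real.sin (2 * π * Y)) * (2 * π * ((n : ℝ) + 2))) := by
          refine mul_le_mul_of_nonneg_left ?_ (by positivity)
          refine mul_le_mul_of_nonneg_right hsin (by positivity)
      _ = (2 * π * Real.exp (-π * X) * Real.sin (2 * π * Y)) *
          (((n : ℝ) + 2) ^ 2 * Real.exp (-π * (((n : ℝ) + 2) ^ 2 - 1) * X)) := by ring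
  -- bound on |T'|
  have hMsum : Summable fun n : ℕ =>
      (2 * π * Real.exp (-π * X) * Real.sin (2 * π * Y)) *
        (((n : ℝ) + 2) ^ 2 * Real.exp (-π * (((n : ℝ) + 2) ^ 2 - 1) * X)) :=
    (summable_mu hX0).mul_left _
  have hnormsum : Summable fun n : ℕ => ‖g' ((n : ℤ) + 2) Y‖ :=
    Summable.of_nonneg_of_le (fun n => norm_nonneg _) htail hMsum
  have habs : |T'| ≤ 2 * π * Real.exp (-π * X) * Real.sin (2 * π * Y) * mu X := by
    calc |T'| ≤ ∑' n : ℕ, ‖g' ((n : ℤ) + 2) Y‖ := norm_tsum_le_tsum_norm hnormsum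
      _ ≤ ∑' n : ℕ, (2 * π * Real.exp (-π * X) * Real.sin (2 * π * Y)) *
          (((n : ℝ) + 2) ^ 2 * Real.exp (-π * (((n : ℝ) + 2) ^ 2 - 1) * X)) :=
        Summable.tsum_le_tsum htail hnormsum hMsum
      _ = 2 * π * Real.exp (-π * X) * Real.sin (2 * π * Y) * mu X := by
        rw [tsum_mul_left]; rfl
  -- final computation
  have hg1 : g' 1 Y = Real.exp (-π * X) * (-Real.sin (2 * π * Y) * (2 * π)) := by
    simp [hg'_def]
  have hderiv2 : deriv (fun y => theta1 X y) Y
      = 2 * (Real.exp (-π * X) * (-Real.sin (2 * π * Y) * (2 * π)) + T') := by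
    rw [hderiv, hsplit, hneg_eq, hnat_eq, hT, hg1]
    ring
  obtain ⟨hlo, hhi⟩ := abs_le.1 habs
  constructor
  · rw [hderiv2]
    nlinarith [hlo]
  · rw [hderiv2]
    nlinarith [hhi]
end

section
/- For all real β > √2 and all α > 0, the function z ↦ θ(α; z) − β·θ(2α; z) is unbounded below on the upper half plane ℍ; in particular its infimum over ℍ is −∞ and the minimum does not exist. Specifically, along z = 1/2 + iy as y → ∞, θ(α; z) − β·θ(2α; z) = √(y/(2α))·(√2 − β + o(1)) → −∞. -/
open Real Filter

-- summability of gaussians over ℤ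
lemma gauss_summable {b : ℝ} (hb : 0 < b) : Summable fun n : ℤ => Real.exp (-b * (n : ℝ) ^ 2) := by
  have hr : Real.exp (-b) < 1 := Real.exp_lt_one_iff.mpr (by linarith)
  have hnat : Summable fun n : ℕ => Real.exp (-b * (n : ℝ) ^ 2) := by
    refine Summable.of_nonneg_of_le (fun n => (Real.exp_pos _).le) (fun n => ?_)
      (summable_geometric_of_lt_one (Real.exp_pos _).le hr)
    rw [← Real.exp_nat_mul]
    apply Real.exp_le_exp.mpr
    have : (n : ℝ) ≤ (n:ℝ)^2 := by exact_mod_cast Nat.le_self_pow two_ne_zero n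
    nlinarith
  apply Summable.of_nat_of_neg_add_one
  · simpa using hnat
  · have : ∀ n : ℕ, Real.exp (-b * ((-(n+1) : ℤ) : ℝ) ^ 2) = Real.exp (-b * (((n+1):ℕ) : ℝ) ^ 2) := by
      intro n; push_cast; ring_nf
    rw [funext this]
    exact hnat.comp_injective (fun a b => by simp)

lemma gauss_shift_summable {b t : ℝ} (hb : 0 < b) :
    Summable fun n : ℤ => Real.exp (-b * ((n : ℝ) + t) ^ 2) := by
  refine Summable.of_nonneg_of_le (fun n => (Real.exp_pos _).le) (fun n => ?_)
    (((gauss_summable (half_pos hb)).mul_left (Real.exp (b * t ^ 2))))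
  rw [← Real.exp_add]
  apply Real.exp_le_exp.mpr
  nlinarith [sq_nonneg ((n:ℝ) + 2 * t)]

lemma gauss_poisson {b : ℝ} (hb : 0 < b) :
    ∑' n : ℤ, Real.exp (-b * (n : ℝ) ^ 2) =
      Real.sqrt (π / b) * ∑' n : ℤ, Real.exp (-(π ^ 2 / b) * (n : ℝ) ^ 2) := by
  have hπ := Real.pi_pos
  have ha : 0 < b / π := div_pos hb hπ
  have := Real.tsum_exp_neg_mul_int_sq ha
  have e1 : ∀ n : ℤ, -π * (b / π) * (n:ℝ)^2 = -b * (n:ℝ)^2 := by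
    intro n; field_simp
  have e2 : ∀ n : ℤ, -π / (b / π) * (n:ℝ)^2 = -(π^2/b) * (n:ℝ)^2 := by
    intro n; rw [div_div_eq_mul_div]; ring
  simp_rw [e1, e2] at this
  rw [this]
  congr 1
  rw [← Real.sqrt_eq_rpow, one_div, ← Real.sqrt_inv, inv_div]

lemma one_le_gauss_tsum {b : ℝ} (hb : 0 < b) :
    1 ≤ ∑' n : ℤ, Real.exp (-b * (n : ℝ) ^ 2) := by
  have h := Summable.le_tsum (gauss_summable hb) 0 (fun j _ => (Real.exp_pos _).le)
  simpa using h

set_option maxHeartbeats 2000000 in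
lemma gauss_tsum_le {b : ℝ} (hb : 0 < b) (hb2 : Real.exp (-b) ≤ 1/2) :
    ∑' n : ℤ, Real.exp (-b * (n : ℝ) ^ 2) ≤ 1 + 4 * Real.exp (-b) := by
  set r := Real.exp (-b) with hr
  have hr0 : 0 < r := Real.exp_pos _
  have hr1 : r < 1 := by linarith
  have hnat : Summable fun n : ℕ => Real.exp (-b * ((n:ℤ) : ℝ) ^ 2) := by
    refine Summable.of_nonneg_of_le (fun n => (Real.exp_pos _).le) (fun n => ?_)
      (summable_geometric_of_lt_one hr0.le hr1)
    rw [hr, ← Real.exp_nat_mul]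
    apply Real.exp_le_exp.mpr
    have : (n : ℝ) ≤ (n:ℝ)^2 := by exact_mod_cast Nat.le_self_pow two_ne_zero n
    push_cast
    nlinarith
  have hneg : Summable fun n : ℕ => Real.exp (-b * ((-(n+1) : ℤ) : ℝ) ^ 2) := by
    have e : ∀ n : ℕ, Real.exp (-b * ((-(n+1) : ℤ) : ℝ) ^ 2)
        = Real.exp (-b * (((n+1):ℤ) : ℝ) ^ 2) := by intro n; push_cast; ring_nf
    rw [funext e]
    exact hnat.comp_injective (fun a b h => by simpa using h)
  have hgeom : Summable fun n : ℕ => r ^ (n + 1) :=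
    (summable_geometric_of_lt_one hr0.le hr1).comp_injective (add_left_injective 1)
  have tail_le : ∀ (f : ℕ → ℝ), (∀ n, f n = Real.exp (-b * ((n:ℝ)+1) ^ 2)) →
      Summable f → ∑' n : ℕ, f n ≤ r / (1 - r) := by
    intro f hf hsf
    have h1 : ∑' n : ℕ, f n ≤ ∑' n : ℕ, r ^ (n + 1) := by
      refine Summable.tsum_le_tsum (fun n => ?_) hsf hgeom
      rw [hf n, hr, ← Real.exp_nat_mul]
      apply Real.exp_le_exp.mpr
      have h2 : ((n:ℝ) + 1) ≤ ((n:ℝ)+1)^2 := by nlinarith [Nat.cast_nonneg (α := ℝ) n]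
      push_cast
      nlinarith
    have h2 : ∑' n : ℕ, r ^ (n + 1) = r / (1 - r) := by
      simp_rw [pow_succ, mul_comm (r ^ _) r]
      rw [tsum_mul_left, tsum_geometric_of_lt_one hr0.le hr1, div_eq_mul_inv]
    linarith [h1, h2.le]
  have split := tsum_of_nat_of_neg_add_one (f := fun n : ℤ => Real.exp (-b * (n:ℝ)^2)) hnat hneg
  have hzero : ∑' n : ℕ, Real.exp (-b * ((n:ℤ) : ℝ) ^ 2)
      = 1 + ∑' n : ℕ, Real.exp (-b * (((n:ℝ)+1)) ^ 2) := by
    rw [Summable.tsum_eq_zero_add hnat]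
    push_cast
    norm_num
  have t1 : ∑' n : ℕ, Real.exp (-b * (((n:ℝ)+1)) ^ 2) ≤ r / (1 - r) := by
    refine tail_le _ (fun n => rfl) ?_
    have := hnat.comp_injective (add_left_injective 1)
    refine this.congr fun n => ?_
    simp only [Function.comp_apply]
    push_cast
    ring_nf
  have t2 : ∑' n : ℕ, Real.exp (-b * ((-(n+1) : ℤ) : ℝ) ^ 2) ≤ r / (1 - r) := by
    refine tail_le _ (fun n => ?_) hneg
    push_cast
    ring_nf
  have hrr : r / (1 - r) ≤ 2 * r := by
    rw [div_le_iff₀ (by linarith)]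
    nlinarith
  calc ∑' n : ℤ, Real.exp (-b * (n : ℝ) ^ 2)
      = (∑' n : ℕ, Real.exp (-b * ((n:ℤ) : ℝ) ^ 2)) + ∑' n : ℕ, Real.exp (-b * ((-(n+1) : ℤ) : ℝ) ^ 2) := by
        exact_mod_cast split
    _ ≤ (1 + r / (1-r)) + r / (1-r) := by rw [hzero]; gcongr <;> assumption
    _ ≤ 1 + 4 * r := by linarith



lemma prod_gauss_summable {d : ℝ} (hd : 0 < d) :
    Summable fun p : ℤ × ℤ =>
      Real.exp (-d * ((p.1:ℝ)) ^ 2) * Real.exp (-d * ((p.2:ℝ)) ^ 2) := by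
  have h1 : Summable fun n : ℤ => Real.exp (-d * (n : ℝ) ^ 2) := gauss_summable hd
  have hnn : 0 ≤ fun p : ℤ × ℤ =>
      Real.exp (-d * ((p.1:ℝ)) ^ 2) * Real.exp (-d * ((p.2:ℝ)) ^ 2) :=
    fun p => by positivity
  refine (summable_prod_of_nonneg hnn).mpr
    ⟨fun m => h1.mul_left (Real.exp (-d * (m : ℝ) ^ 2)), ?_⟩
  have e : ∀ m : ℤ, (∑' n : ℤ, Real.exp (-d * (((m,n) : ℤ × ℤ).1 : ℝ) ^ 2)
      * Real.exp (-d * (((m,n) : ℤ × ℤ).2 : ℝ) ^ 2))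
      = Real.exp (-d * (m:ℝ)^2) * ∑' n : ℤ, Real.exp (-d * (n : ℝ) ^ 2) :=
    fun m => tsum_mul_left (a := Real.exp (-d * (m:ℝ)^2))
      (f := fun n : ℤ => Real.exp (-d * (n:ℝ)^2))
  rw [funext e]
  exact h1.mul_right _

lemma summable2 {c y : ℝ} (hc : 0 < c) (hy : 0 < y) :
    Summable fun p : ℤ × ℤ =>
      Real.exp (-c * (((p.1 : ℝ) / 2 + (p.2 : ℝ)) ^ 2 + (p.1 : ℝ) ^ 2 * y ^ 2)) := by
  have hmin : 0 < min 1 (y ^ 2) := lt_min one_pos (by positivity)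
  set d := c * min 1 (y ^ 2) / 4 with hd
  have hd0 : 0 < d := by positivity
  refine Summable.of_nonneg_of_le (fun p => (Real.exp_pos _).le) (fun p => ?_)
    (prod_gauss_summable hd0)
  rw [← Real.exp_add]
  apply Real.exp_le_exp.mpr
  obtain ⟨m, n⟩ := p
  have h1 : min 1 (y^2) ≤ 1 := min_le_left _ _
  have h2 : min 1 (y^2) ≤ y^2 := min_le_right _ _
  have key : min 1 (y^2) / 2 * ((m:ℝ)^2 + (n:ℝ)^2) ≤ ((m:ℝ)/2 + n) ^ 2 + (m:ℝ)^2 * y^2 := by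
    nlinarith [sq_nonneg ((m:ℝ)/2 + n), sq_nonneg (m:ℝ), sq_nonneg (n:ℝ),
      sq_nonneg ((m:ℝ)*3/2 + n), hmin.le]
  simp only [hd]
  nlinarith [key, hc]

lemma theta_half {a y : ℝ} (hy : 0 < y) :
    theta a ⟨1/2, y⟩ = ∑' p : ℤ × ℤ,
      Real.exp (-(a * π / y) * (((p.1 : ℝ) / 2 + (p.2 : ℝ)) ^ 2 + (p.1 : ℝ) ^ 2 * y ^ 2)) := by
  unfold theta
  refine tsum_congr fun p => ?_
  have him : (⟨1/2, y⟩ : ℂ).im = y := rfl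
  have habs : (‖(p.1 : ℂ) * ⟨1/2, y⟩ + (p.2 : ℂ)‖) ^ 2
      = ((p.1 : ℝ) / 2 + (p.2 : ℝ)) ^ 2 + (p.1 : ℝ) ^ 2 * y ^ 2 := by
    rw [Complex.sq_norm, Complex.normSq_apply]
    simp only [Complex.add_re, Complex.add_im, Complex.mul_re, Complex.mul_im,
      Complex.intCast_re, Complex.intCast_im]
    norm_num
    ring
  rw [him, habs]

lemma inner_summable {c : ℝ} (hc : 0 < c) (m : ℤ) :
    Summable fun n : ℤ => Real.exp (-c * ((m : ℝ)/2 + (n:ℝ)) ^ 2) :=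
  (gauss_shift_summable (t := (m:ℝ)/2) hc).congr fun n => by ring_nf

lemma inner_le {c : ℝ} (hc : 0 < c) (m : ℤ) :
    ∑' n : ℤ, Real.exp (-c * ((m : ℝ)/2 + (n:ℝ)) ^ 2)
      ≤ ∑' n : ℤ, Real.exp (-(c/4) * (n:ℝ) ^ 2) := by
  rcases Int.even_or_odd m with ⟨k, hk⟩ | ⟨k, hk⟩
  · have e1 : ∀ n : ℤ, Real.exp (-c * ((m : ℝ)/2 + (n:ℝ)) ^ 2)
        = (fun j : ℤ => Real.exp (-c * (j:ℝ) ^ 2)) ((Equiv.addLeft k) n) := by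
      intro n
      simp only [Equiv.coe_addLeft, hk]
      push_cast
      ring_nf
    rw [funext e1, (Equiv.addLeft k).tsum_eq (fun j : ℤ => Real.exp (-c * (j:ℝ) ^ 2))]
    refine Summable.tsum_le_tsum (fun n => ?_) (gauss_summable hc) (gauss_summable (by positivity))
    apply Real.exp_le_exp.mpr
    nlinarith [sq_nonneg (n:ℝ)]
  · have e1 : ∀ n : ℤ, Real.exp (-c * ((m : ℝ)/2 + (n:ℝ)) ^ 2)
        = (fun j : ℤ => Real.exp (-c * ((j:ℝ) + 1/2) ^ 2)) ((Equiv.addLeft k) n) := by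
      intro n
      simp only [Equiv.coe_addLeft, hk]
      push_cast
      ring_nf
    rw [funext e1, (Equiv.addLeft k).tsum_eq (fun j : ℤ => Real.exp (-c * ((j:ℝ) + 1/2) ^ 2))]
    refine Summable.tsum_le_tsum (fun n => ?_) (gauss_shift_summable hc) (gauss_summable (by positivity))
    apply Real.exp_le_exp.mpr
    have key : (c/4) * (n:ℝ)^2 ≤ c * ((n:ℝ) + 1/2)^2 := by
      rcases le_or_gt 0 n with h | h
      · have : (0:ℝ) ≤ (n:ℝ) := by exact_mod_cast h
        nlinarith
      · have h1 : n ≤ -1 := by omega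
        have h2 : (n:ℝ) ≤ -1 := by exact_mod_cast h1
        nlinarith [mul_nonneg (by linarith : (0:ℝ) ≤ -(3*(n:ℝ)+1)) (by linarith : (0:ℝ) ≤ -((n:ℝ)+1)), hc.le]
    linarith

lemma theta_split {a y : ℝ} (ha : 0 < a) (hy : 0 < y) :
    (∑' p : ℤ × ℤ,
        Real.exp (-(a * π / y) * (((p.1 : ℝ) / 2 + (p.2 : ℝ)) ^ 2 + (p.1 : ℝ) ^ 2 * y ^ 2)))
      = ∑' m : ℤ, Real.exp (-(a * π * y) * (m:ℝ)^2)
          * ∑' n : ℤ, Real.exp (-(a * π / y) * ((m:ℝ)/2 + (n:ℝ)) ^ 2) := by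
  have hπ := Real.pi_pos
  have hc : 0 < a * π / y := by positivity
  have hsum2 := summable2 hc hy
  have hinner : ∀ m : ℤ, Summable fun n : ℤ =>
      Real.exp (-(a * π / y) * (((m : ℝ) / 2 + (n : ℝ)) ^ 2 + (m : ℝ) ^ 2 * y ^ 2)) := by
    intro m
    refine ((inner_summable hc m).mul_left
      (Real.exp (-(a * π / y) * ((m : ℝ) ^ 2 * y ^ 2)))).congr fun n => ?_
    rw [← Real.exp_add]
    congr 1
    ring
  rw [Summable.tsum_prod' hsum2 (fun m => hinner m)]
  refine tsum_congr fun m => ?_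
  have e : ∀ n : ℤ, Real.exp (-(a * π / y) * (((m : ℝ) / 2 + (n : ℝ)) ^ 2 + (m : ℝ) ^ 2 * y ^ 2))
      = Real.exp (-(a * π * y) * (m:ℝ)^2) * Real.exp (-(a * π / y) * ((m:ℝ)/2 + (n:ℝ)) ^ 2) := by
    intro n
    rw [← Real.exp_add]
    congr 1
    field_simp
    ring
  rw [funext e, tsum_mul_left]



lemma theta_lower {a y : ℝ} (ha : 0 < a) (hy : 0 < y) :
    Real.sqrt (y / a) ≤ theta a ⟨1/2, y⟩ := by
  have hπ := Real.pi_pos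
  have hc : 0 < a * π / y := by positivity
  rw [theta_half hy]
  have step1 : ∑' n : ℤ, Real.exp (-(a * π / y) * (n:ℝ)^2) ≤ ∑' p : ℤ × ℤ,
      Real.exp (-(a * π / y) * (((p.1 : ℝ) / 2 + (p.2 : ℝ)) ^ 2 + (p.1 : ℝ) ^ 2 * y ^ 2)) := by
    refine Summable.tsum_le_tsum_of_inj (fun n : ℤ => ((0, n) : ℤ × ℤ))
      (fun n₁ n₂ h => by simpa using h) (fun p _ => (Real.exp_pos _).le)
      (fun n => le_of_eq ?_) (gauss_summable hc) (summable2 hc hy)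
    norm_num
  refine le_trans ?_ step1
  rw [gauss_poisson hc]
  have e1 : π / (a * π / y) = y / a := by field_simp
  have e2 : Real.sqrt (y/a) = Real.sqrt (π / (a * π / y)) * 1 := by rw [e1, mul_one]
  rw [e2]
  have h0 : (0:ℝ) ≤ Real.sqrt (π / (a * π / y)) := Real.sqrt_nonneg _
  exact mul_le_mul_of_nonneg_left (one_le_gauss_tsum (by positivity)) h0

lemma theta_upper {a y : ℝ} (ha : 0 < a) (hy : 0 < y)
    (h1 : Real.exp (-(π * y / a)) ≤ 1/2) (h2 : Real.exp (-(4 * (π * y) / a)) ≤ 1/2)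
    (h3 : Real.exp (-(a * π * y)) ≤ 1/2) :
    theta a ⟨1/2, y⟩ ≤ (1 + 4 * Real.exp (-(π * y / a))) * Real.sqrt (y / a)
      + 24 * Real.exp (-(a * π * y)) * Real.sqrt (y / a) := by
  have hπ := Real.pi_pos
  have hc : 0 < a * π / y := by positivity
  set c := a * π / y with hcdef
  set S : ℤ → ℝ := fun m => ∑' n : ℤ, Real.exp (-c * ((m:ℝ)/2 + (n:ℝ)) ^ 2) with hS
  set g : ℤ → ℝ := fun m => Real.exp (-(a * π * y) * (m:ℝ)^2) * S m with hg
  set T : ℝ := ∑' n : ℤ, Real.exp (-(c/4) * (n:ℝ) ^ 2) with hT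
  have hθ : theta a ⟨1/2, y⟩ = ∑' m : ℤ, g m := by
    rw [theta_half hy, theta_split ha hy]
  -- summability of g
  have hgsum : Summable g := by
    have h2d := summable2 hc hy
    have hnn : 0 ≤ fun p : ℤ × ℤ =>
        Real.exp (-c * (((p.1 : ℝ) / 2 + (p.2 : ℝ)) ^ 2 + (p.1 : ℝ) ^ 2 * y ^ 2)) :=
      fun p => (Real.exp_pos _).le
    have hfib := ((summable_prod_of_nonneg hnn).mp h2d).2
    refine hfib.congr fun m => ?_
    have e : ∀ n : ℤ, Real.exp (-c * ((((m,n) : ℤ×ℤ).1 : ℝ) / 2 + (((m,n):ℤ×ℤ).2 : ℝ)) ^ 2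
          + -c * ((((m,n):ℤ×ℤ).1 : ℝ) ^ 2 * y ^ 2))
        = Real.exp (-(a * π * y) * (m:ℝ)^2) * Real.exp (-c * ((m:ℝ)/2 + (n:ℝ)) ^ 2) := by
      intro n
      rw [← Real.exp_add]
      congr 1
      rw [hcdef]
      field_simp
      ring
    calc (∑' n : ℤ, Real.exp (-c * (((m:ℝ)/2 + (n:ℝ)) ^ 2 + (m:ℝ) ^ 2 * y ^ 2)))
        = ∑' n : ℤ, Real.exp (-(a * π * y) * (m:ℝ)^2) * Real.exp (-c * ((m:ℝ)/2 + (n:ℝ)) ^ 2) := by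
          refine tsum_congr fun n => ?_
          rw [← e n]
          congr 1
          ring
      _ = g m := by
          rw [tsum_mul_left]
  -- bound on T
  have hTle : T ≤ 6 * Real.sqrt (y / a) := by
    have hc4 : 0 < c / 4 := by positivity
    rw [hT, gauss_poisson hc4]
    have e1 : π / (c / 4) = 4 * y / a := by rw [hcdef]; field_simp
    have e2 : π ^ 2 / (c / 4) = 4 * (π * y) / a := by rw [hcdef]; field_simp
    rw [e1, e2]
    have hU : ∑' n : ℤ, Real.exp (-(4 * (π * y) / a) * (n:ℝ)^2) ≤ 3 := by
      have := gauss_tsum_le (b := 4 * (π * y) / a) (by positivity) h2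
      nlinarith [Real.exp_pos (-(4 * (π * y) / a))]
    have hsq : Real.sqrt (4 * y / a) = 2 * Real.sqrt (y / a) := by
      rw [show 4 * y / a = 4 * (y / a) by ring, Real.sqrt_mul (by norm_num) (y/a),
        show Real.sqrt 4 = 2 by rw [show (4:ℝ) = 2^2 by norm_num, Real.sqrt_sq (by norm_num)]]
    calc Real.sqrt (4 * y / a) * ∑' n : ℤ, Real.exp (-(4 * (π * y) / a) * (n:ℝ)^2)
        ≤ Real.sqrt (4 * y / a) * 3 := by
          exact mul_le_mul_of_nonneg_left hU (Real.sqrt_nonneg _)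
      _ = 6 * Real.sqrt (y / a) := by rw [hsq]; ring
  have hT0 : 0 ≤ T := tsum_nonneg fun n => (Real.exp_pos _).le
  -- S 0 bound
  have hg0 : g 0 ≤ (1 + 4 * Real.exp (-(π * y / a))) * Real.sqrt (y / a) := by
    have : g 0 = S 0 := by rw [hg]; norm_num
    rw [this, hS]
    have e0 : ∀ n : ℤ, Real.exp (-c * (((0:ℤ):ℝ)/2 + (n:ℝ)) ^ 2) = Real.exp (-c * (n:ℝ)^2) := by
      intro n; norm_num
    calc (∑' n : ℤ, Real.exp (-c * (((0:ℤ):ℝ)/2 + (n:ℝ)) ^ 2))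
        = ∑' n : ℤ, Real.exp (-c * (n:ℝ)^2) := tsum_congr e0
      _ = Real.sqrt (π / c) * ∑' n : ℤ, Real.exp (-(π^2/c) * (n:ℝ)^2) := gauss_poisson hc
      _ ≤ (1 + 4 * Real.exp (-(π * y / a))) * Real.sqrt (y / a) := by
          have e1 : π / c = y / a := by rw [hcdef]; field_simp
          have e2 : π ^ 2 / c = π * y / a := by rw [hcdef]; field_simp
          rw [e1, e2]
          have := gauss_tsum_le (b := π * y / a) (by positivity) h1
          calc Real.sqrt (y/a) * ∑' n : ℤ, Real.exp (-(π * y / a) * (n:ℝ)^2)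
              ≤ Real.sqrt (y/a) * (1 + 4 * Real.exp (-(π * y / a))) :=
                mul_le_mul_of_nonneg_left this (Real.sqrt_nonneg _)
            _ = (1 + 4 * Real.exp (-(π * y / a))) * Real.sqrt (y / a) := by ring
  -- tail bound
  have hgeo : Summable fun m : ℤ => Real.exp (-(a * π * y) * (m:ℝ)^2) :=
    gauss_summable (by positivity)
  have hite1 : Summable fun m : ℤ => if m = 0 then 0 else g m :=
    hgsum.summable_of_eq_zero_or_self fun m => by by_cases h : m = 0 <;> simp [h]
  have hite2 : Summable fun m : ℤ =>
      (if m = 0 then 0 else Real.exp (-(a * π * y) * (m:ℝ)^2)) * T := by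
    apply Summable.mul_right
    exact hgeo.summable_of_eq_zero_or_self fun m => by by_cases h : m = 0 <;> simp [h]
  have htail : (∑' m : ℤ, if m = 0 then 0 else g m)
      ≤ 4 * Real.exp (-(a * π * y)) * T := by
    have step1 : (∑' m : ℤ, if m = 0 then 0 else g m)
        ≤ ∑' m : ℤ, (if m = 0 then 0 else Real.exp (-(a * π * y) * (m:ℝ)^2)) * T := by
      refine Summable.tsum_le_tsum (fun m => ?_) hite1 hite2
      by_cases h : m = 0
      · simp [h]
      · simp only [h, if_neg]
        exact mul_le_mul_of_nonneg_left (inner_le hc m) (Real.exp_pos _).le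
    have step2 : (∑' m : ℤ, (if m = 0 then 0 else Real.exp (-(a * π * y) * (m:ℝ)^2)) * T)
        = (∑' m : ℤ, if m = 0 then 0 else Real.exp (-(a * π * y) * (m:ℝ)^2)) * T :=
      tsum_mul_right
    have step3 : (∑' m : ℤ, if m = 0 then 0 else Real.exp (-(a * π * y) * (m:ℝ)^2))
        ≤ 4 * Real.exp (-(a * π * y)) := by
      have hsplit := Summable.tsum_eq_add_tsum_ite hgeo 0
      have hfull := gauss_tsum_le (b := a * π * y) (by positivity) h3
      simp only [Int.cast_zero, ne_eq, OfNat.ofNat_ne_zero, not_false_eq_true, zero_pow,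
        mul_zero, Real.exp_zero] at hsplit
      linarith [hsplit, hfull]
    calc (∑' m : ℤ, if m = 0 then 0 else g m)
        ≤ (∑' m : ℤ, if m = 0 then 0 else Real.exp (-(a * π * y) * (m:ℝ)^2)) * T := by
          rw [← step2]; exact step1
      _ ≤ 4 * Real.exp (-(a * π * y)) * T := mul_le_mul_of_nonneg_right step3 hT0
  have hsplit := Summable.tsum_eq_add_tsum_ite hgsum 0
  calc theta a ⟨1/2, y⟩ = g 0 + ∑' m : ℤ, if m = 0 then 0 else g m := by rw [hθ, hsplit]
    _ ≤ (1 + 4 * Real.exp (-(π * y / a))) * Real.sqrt (y / a)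
        + 4 * Real.exp (-(a * π * y)) * (6 * Real.sqrt (y / a)) := by
        have := le_trans htail (by nlinarith [Real.exp_pos (-(a * π * y)), hTle] :
          4 * Real.exp (-(a * π * y)) * T ≤ 4 * Real.exp (-(a * π * y)) * (6 * Real.sqrt (y/a)))
        linarith [hg0, this]
    _ = (1 + 4 * Real.exp (-(π * y / a))) * Real.sqrt (y / a)
        + 24 * Real.exp (-(a * π * y)) * Real.sqrt (y / a) := by ring
lemma sqrt_tendsto_atTop : Tendsto Real.sqrt atTop atTop := by
  rw [tendsto_atTop_atTop]
  intro b
  refine ⟨max (b^2) 0, fun a ha => ?_⟩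
  calc b ≤ |b| := le_abs_self b
    _ = Real.sqrt (b^2) := (Real.sqrt_sq_eq_abs b).symm
    _ ≤ Real.sqrt a := Real.sqrt_le_sqrt (le_trans (le_max_left _ _) ha)

theorem no_minimizer_of_sqrt_two_lt (α β : ℝ) (hα : 0 < α) (hβ : Real.sqrt 2 < β) :
    (∀ M : ℝ, ∃ z : ℂ, 0 < z.im ∧ theta α z - β * theta (2 * α) z < M) ∧
    Tendsto (fun y : ℝ =>
        theta α (⟨1 / 2, y⟩ : ℂ) - β * theta (2 * α) (⟨1 / 2, y⟩ : ℂ))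
      atTop atBot := by
  have hπ := Real.pi_pos
  have h2pos : (0:ℝ) < Real.sqrt 2 := Real.sqrt_pos.mpr (by norm_num)
  have hβ0 : 0 ≤ β := le_trans h2pos.le hβ.le
  have hβ2 : 1 < β / Real.sqrt 2 := by
    rw [lt_div_iff₀ h2pos]
    simpa using hβ
  set δ := (β / Real.sqrt 2 - 1) / 2 with hδ
  have hδ0 : 0 < δ := by rw [hδ]; linarith
  have hdecay : ∀ k : ℝ, 0 < k → Tendsto (fun y : ℝ => Real.exp (-(k * y))) atTop (nhds 0) := by
    intro k hk
    exact Real.tendsto_exp_atBot.comp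
      (tendsto_neg_atTop_atBot.comp (Tendsto.const_mul_atTop hk tendsto_id))
  have e1 : ∀ᶠ y : ℝ in atTop, Real.exp (-((π/α) * y)) ≤ 1/2 :=
    (hdecay (π/α) (by positivity)).eventually_le_const (by norm_num)
  have e2 : ∀ᶠ y : ℝ in atTop, Real.exp (-((4*π/α) * y)) ≤ 1/2 :=
    (hdecay (4*π/α) (by positivity)).eventually_le_const (by norm_num)
  have e3 : ∀ᶠ y : ℝ in atTop, Real.exp (-(α*π*y)) ≤ 1/2 :=
    (hdecay (α*π) (by positivity)).eventually_le_const (by norm_num)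
  have e4 : ∀ᶠ y : ℝ in atTop,
      4 * Real.exp (-((π/α) * y)) + 24 * Real.exp (-(α*π*y)) ≤ δ := by
    have ht := ((hdecay (π/α) (by positivity)).const_mul 4).add
      ((hdecay (α*π) (by positivity)).const_mul 24)
    norm_num at ht
    exact ht.eventually_le_const hδ0
  have hev : ∀ᶠ y : ℝ in atTop,
      theta α (⟨1/2, y⟩ : ℂ) - β * theta (2 * α) (⟨1/2, y⟩ : ℂ)
        ≤ -δ * Real.sqrt (y / α) := by
    filter_upwards [e1, e2, e3, e4, eventually_gt_atTop 0] with y h1 h2 h3 h4 hy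
    have h1' : Real.exp (-(π * y / α)) ≤ 1/2 := by
      rw [show -(π * y / α) = -((π/α) * y) by ring]; exact h1
    have h2' : Real.exp (-(4 * (π * y) / α)) ≤ 1/2 := by
      rw [show -(4 * (π * y) / α) = -((4*π/α) * y) by ring]; exact h2
    have up := theta_upper hα hy h1' h2' h3
    have lo := theta_lower (show (0:ℝ) < 2 * α by linarith) hy
    have hq0 : (0:ℝ) ≤ Real.sqrt (y / α) := Real.sqrt_nonneg _
    have hs : Real.sqrt (y / (2 * α)) = Real.sqrt (y / α) / Real.sqrt 2 := by
      rw [show y / (2 * α) = (y / α) / 2 by rw [div_div, mul_comm],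
        Real.sqrt_div (by positivity) 2]
    have hB : β * Real.sqrt (y / (2 * α)) = (β / Real.sqrt 2) * Real.sqrt (y / α) := by
      rw [hs]; ring
    have hlo2 : (β / Real.sqrt 2) * Real.sqrt (y / α) ≤ β * theta (2 * α) (⟨1/2, y⟩ : ℂ) := by
      rw [← hB]
      exact mul_le_mul_of_nonneg_left lo hβ0
    have h4' : 4 * Real.exp (-(π * y / α)) + 24 * Real.exp (-(α*π*y)) ≤ δ := by
      rw [show -(π * y / α) = -((π/α) * y) by ring]; exact h4
    have hcoef : β / Real.sqrt 2 = 1 + 2 * δ := by rw [hδ]; ring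
    nlinarith [up, hlo2, hq0, h4', Real.exp_pos (-(π * y / α)), Real.exp_pos (-(α*π*y))]
  have hlim : Tendsto (fun y : ℝ => -δ * Real.sqrt (y / α)) atTop atBot := by
    apply (tendsto_const_mul_atBot_of_neg (by linarith : -δ < 0)).mpr
    exact sqrt_tendsto_atTop.comp (Tendsto.atTop_div_const hα tendsto_id)
  have tmain : Tendsto (fun y : ℝ =>
      theta α (⟨1 / 2, y⟩ : ℂ) - β * theta (2 * α) (⟨1 / 2, y⟩ : ℂ)) atTop atBot :=
    tendsto_atBot_mono' atTop hev hlim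
  refine ⟨fun M => ?_, tmain⟩
  obtain ⟨y, hy1, hy2⟩ :=
    ((tmain.eventually (eventually_lt_atBot M)).and (eventually_gt_atTop 0)).exists
  exact ⟨⟨1/2, y⟩, hy2, hy1⟩
end

section
/- Let α ≥ 1 and y ≥ (4/5)α. Then for every integer n ≥ 1, (n²πy/(2α) − 1/2)·e^{n²πy/(2α)} − (n²π/α − 1/2) > 0. Consequently the derivative in y of √y·(ϑ₃(y/α) − ϑ₃(y/(2α))) is strictly positive, where ϑ₃(X) = 1 + 2Σ_{n=1}^∞ e^{−πn²X}. -/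
open Real

lemma key_ineq {B : ℝ} (hB : 2 * π / 5 ≤ B) :
    5 / 2 * B - 1 / 2 < (B - 1 / 2) * Real.exp B := by
  have hπ : (3.141592 : ℝ) < π := Real.pi_gt_d6
  have hc : (1.2566368 : ℝ) ≤ B := by nlinarith
  have h0 : (0:ℝ) ≤ B := by linarith
  have hexp : ∑ i ∈ Finset.range 8, B ^ i / (Nat.factorial i : ℝ) ≤ Real.exp B :=
    Real.sum_le_exp_of_nonneg h0 8
  simp only [Finset.sum_range_succ, Finset.sum_range_zero, Nat.factorial] at hexp
  norm_num at hexp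
  have hB2 : (0:ℝ) ≤ B - 1/2 := by linarith
  have h2 : (B - 1/2) * (1 + B + B^2/2 + B^3/6 + B^4/24 + B^5/120 + B^6/720 + B^7/5040)
      ≤ (B - 1/2) * Real.exp B := by
    apply mul_le_mul_of_nonneg_left _ hB2
    nlinarith [hexp]
  obtain ⟨t, ht, rfl⟩ : ∃ t, 0 ≤ t ∧ B = 1.2566368 + t :=
    ⟨B - 1.2566368, by linarith, by ring⟩
  nlinarith [pow_nonneg ht 2, pow_nonneg ht 3, pow_nonneg ht 4, pow_nonneg ht 5,
    pow_nonneg ht 6, pow_nonneg ht 7, pow_nonneg ht 8, h2]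

lemma S0' {T : ℝ} (hT : 0 < T) : Summable fun n : ℤ => Real.exp (-π * (n:ℝ)^2 * T) := by
  have h := summable_pow_mul_jacobiTheta₂_term_bound 0 hT 0
  refine h.congr fun n => ?_
  push_cast
  rw [pow_zero, one_mul]
  congr 1
  ring

lemma S2' {T : ℝ} (hT : 0 < T) :
    Summable fun n : ℤ => (n:ℝ)^2 * Real.exp (-π * (n:ℝ)^2 * T) := by
  have h := summable_pow_mul_jacobiTheta₂_term_bound 0 hT 2
  refine h.congr fun n => ?_
  push_cast
  rw [sq_abs]
  congr 2
  ring

lemma term_pos' {y B : ℝ} (hy : 0 < y) (hB : 2 * π / 5 ≤ B) :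
    0 < 1 / (2 * Real.sqrt y) * (Real.exp (-(2 * B)) - Real.exp (-B))
        + Real.sqrt y * (-(2 * B / y) * Real.exp (-(2 * B)) - -(B / y) * Real.exp (-B)) := by
  have hB0 : 0 < B := lt_of_lt_of_le (by positivity) hB
  obtain ⟨s, hs0, rfl⟩ : ∃ s, 0 < s ∧ y = s ^ 2 :=
    ⟨Real.sqrt y, Real.sqrt_pos.mpr hy, (Real.sq_sqrt hy.le).symm⟩
  rw [Real.sqrt_sq hs0.le]
  have hkey := key_ineq hB
  have hEB : Real.exp (-B) = Real.exp (-(2 * B)) * Real.exp B := by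
    rw [← Real.exp_add]; ring_nf
  have hE2 : 0 < Real.exp (-(2 * B)) := Real.exp_pos _
  have hmain : 1 / (2 * s) * (Real.exp (-(2 * B)) - Real.exp (-B))
        + s * (-(2 * B / s ^ 2) * Real.exp (-(2 * B)) - -(B / s ^ 2) * Real.exp (-B))
      = Real.exp (-(2 * B)) / s * ((B - 1 / 2) * Real.exp B - (5 / 2 * B - 1 / 2))
        + Real.exp (-(2 * B)) / s * (5 / 2 * B - 2 * B) := by
    rw [hEB]
    field_simp
    ring
  rw [hmain]
  have h1 : 0 < Real.exp (-(2 * B)) / s := by positivity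
  nlinarith [h1]

/-- `ϑ₃(X) = Σ_{n∈ℤ} e^{−πn²X}`. -/
noncomputable def theta3 (X : ℝ) : ℝ :=
  ∑' n : ℤ, Real.exp (-π * (n : ℝ) ^ 2 * X)

set_option maxHeartbeats 1600000 in
theorem deriv_sqrt_mul_theta3_diff_pos (α y : ℝ) (hα : 1 ≤ α) (hy : 4 / 5 * α ≤ y) :
    (∀ n : ℕ, 1 ≤ n →
      0 < ((n : ℝ) ^ 2 * π * y / (2 * α) - 1 / 2) * Real.exp ((n : ℝ) ^ 2 * π * y / (2 * α))
            - ((n : ℝ) ^ 2 * π / α - 1 / 2)) ∧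
    0 < deriv (fun t : ℝ => Real.sqrt t * (theta3 (t / α) - theta3 (t / (2 * α)))) y := by
  have hα0 : (0:ℝ) < α := by linarith
  have hy0 : (0:ℝ) < y := by nlinarith
  have hy45 : (4:ℝ)/5 ≤ y := by nlinarith
  constructor
  · intro n hn
    have hn1 : (1:ℝ) ≤ (n:ℝ) := by exact_mod_cast hn
    have hn2 : (1:ℝ) ≤ (n:ℝ)^2 := by nlinarith
    set B := (n:ℝ)^2 * π * y / (2*α) with hBdef
    have hB : 2*π/5 ≤ B := by
      rw [hBdef, le_div_iff₀ (by positivity)]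
      nlinarith [pi_pos, mul_pos pi_pos hy0,
        mul_nonneg (mul_nonneg pi_pos.le (sub_nonneg.mpr hn2)) hy0.le]
    have hkey := key_ineq hB
    have h52 : (n:ℝ)^2*π/α - 1/2 ≤ 5/2*B - 1/2 := by
      have h1 : 0 ≤ (n:ℝ)^2*π/α := by positivity
      have h2 : (0:ℝ) ≤ 5/4*y - 1 := by linarith
      have h3 := mul_nonneg h1 h2
      have h4 : 5/2*B - 1/2 - ((n:ℝ)^2*π/α - 1/2) = (n:ℝ)^2*π/α * (5/4*y - 1) := by
        rw [hBdef]; field_simp; ring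
      linarith [h3, h4]
    linarith [hkey]
  · -- derivative part
    have hkeyB : ∀ n : ℤ, n ≠ 0 → 2*π/5 ≤ π*(n:ℝ)^2*y/(2*α) := by
      intro n hn
      have hn1 : (1:ℝ) ≤ |(n:ℝ)| := by exact_mod_cast Int.one_le_abs hn
      have hn2 : (1:ℝ) ≤ (n:ℝ)^2 := by nlinarith [sq_abs (n:ℝ)]
      rw [le_div_iff₀ (by positivity)]
      nlinarith [pi_pos, mul_pos pi_pos hy0,
        mul_nonneg (mul_nonneg pi_pos.le (sub_nonneg.mpr hn2)) hy0.le]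
    -- the summand functions and their derivatives
    set c1 : ℤ → ℝ := fun n => π*(n:ℝ)^2/α with hc1
    set c2 : ℤ → ℝ := fun n => π*(n:ℝ)^2/(2*α) with hc2
    set g : ℤ → ℝ → ℝ := fun n t =>
      Real.sqrt t * (Real.exp (-(c1 n) * t) - Real.exp (-(c2 n) * t)) with hgdef
    set g' : ℤ → ℝ → ℝ := fun n t =>
      1/(2*Real.sqrt t) * (Real.exp (-(c1 n) * t) - Real.exp (-(c2 n) * t))
        + Real.sqrt t * ((-(c1 n)) * Real.exp (-(c1 n) * t)
            - (-(c2 n)) * Real.exp (-(c2 n) * t)) with hg'def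
    set T0 : ℝ := y/(4*α) with hT0
    have hT0pos : 0 < T0 := by positivity
    set u : ℤ → ℝ := fun n =>
      (1/Real.sqrt (y/2)) * Real.exp (-π*(n:ℝ)^2*T0)
        + (Real.sqrt (2*y) * (π/α + π/(2*α))) * ((n:ℝ)^2 * Real.exp (-π*(n:ℝ)^2*T0))
      with hudef
    have hu : Summable u := ((S0' hT0pos).mul_left _).add ((S2' hT0pos).mul_left _)
    have hgderiv : ∀ (n : ℤ) (t : ℝ), t ∈ Set.Ioo (y/2) (2*y) → HasDerivAt (g n) (g' n t) t := by
      intro n t ht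
      have ht0 : 0 < t := lt_trans (by linarith [ht.1]) ht.1
      have h1 : HasDerivAt (fun s : ℝ => Real.exp (-(c1 n) * s))
          ((-(c1 n)) * Real.exp (-(c1 n) * t)) t := by
        have := ((hasDerivAt_id t).const_mul (-(c1 n))).exp
        simpa [mul_comm] using this
      have h2 : HasDerivAt (fun s : ℝ => Real.exp (-(c2 n) * s))
          ((-(c2 n)) * Real.exp (-(c2 n) * t)) t := by
        have := ((hasDerivAt_id t).const_mul (-(c2 n))).exp
        simpa [mul_comm] using this
      exact (Real.hasDerivAt_sqrt ht0.ne').mul (h1.sub h2)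
    have hbound : ∀ (n : ℤ) (t : ℝ), t ∈ Set.Ioo (y/2) (2*y) → ‖g' n t‖ ≤ u n := by
      intro n t ht
      have ht0 : 0 < t := lt_trans (by linarith [ht.1]) ht.1
      have hc1n : 0 ≤ c1 n := by rw [hc1]; positivity
      have hc2n : 0 ≤ c2 n := by rw [hc2]; positivity
      set E0 := Real.exp (-π*(n:ℝ)^2*T0) with hE0
      have hE0pos : 0 < E0 := Real.exp_pos _
      have hE1 : Real.exp (-(c1 n) * t) ≤ E0 := by
        rw [hE0]
        apply Real.exp_le_exp.mpr
        have hd : -π*(n:ℝ)^2*T0 - (-(c1 n)*t) = π*(n:ℝ)^2/α * (t - y/4) := by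
          simp only [hc1, hT0]; field_simp; ring
        have hnn := mul_nonneg (show (0:ℝ) ≤ π*(n:ℝ)^2/α by positivity)
          (show (0:ℝ) ≤ t - y/4 by linarith [ht.1])
        linarith [hd, hnn]
      have hE2 : Real.exp (-(c2 n) * t) ≤ E0 := by
        rw [hE0]
        apply Real.exp_le_exp.mpr
        have hd : -π*(n:ℝ)^2*T0 - (-(c2 n)*t) = π*(n:ℝ)^2/(2*α) * (t - y/2) := by
          simp only [hc2, hT0]; field_simp; ring
        have hnn := mul_nonneg (show (0:ℝ) ≤ π*(n:ℝ)^2/(2*α) by positivity)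
          (show (0:ℝ) ≤ t - y/2 by linarith [ht.1])
        linarith [hd, hnn]
      have hE1p : 0 < Real.exp (-(c1 n) * t) := Real.exp_pos _
      have hE2p : 0 < Real.exp (-(c2 n) * t) := Real.exp_pos _
      have hs1 : Real.sqrt (y/2) ≤ Real.sqrt t := Real.sqrt_le_sqrt (le_of_lt ht.1)
      have hs2 : Real.sqrt t ≤ Real.sqrt (2*y) := Real.sqrt_le_sqrt (le_of_lt ht.2)
      have hsp : 0 < Real.sqrt (y/2) := Real.sqrt_pos.mpr (by linarith)
      have hstp : 0 < Real.sqrt t := Real.sqrt_pos.mpr ht0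
      rw [hg'def]
      simp only [Real.norm_eq_abs]
      have habs1 : |Real.exp (-(c1 n) * t) - Real.exp (-(c2 n) * t)| ≤ E0 := by
        rw [abs_sub_le_iff]; constructor <;> linarith
      have habs2 : |(-(c1 n)) * Real.exp (-(c1 n) * t) - (-(c2 n)) * Real.exp (-(c2 n) * t)|
          ≤ (c1 n + c2 n) * E0 := by
        rw [abs_sub_le_iff]
        constructor <;> nlinarith [mul_le_mul_of_nonneg_left hE1 hc1n,
          mul_le_mul_of_nonneg_left hE2 hc2n, mul_nonneg hc1n hE1p.le, mul_nonneg hc2n hE2p.le]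
      calc |1/(2*Real.sqrt t) * (Real.exp (-(c1 n) * t) - Real.exp (-(c2 n) * t))
            + Real.sqrt t * ((-(c1 n)) * Real.exp (-(c1 n) * t)
                - (-(c2 n)) * Real.exp (-(c2 n) * t))|
          ≤ |1/(2*Real.sqrt t) * (Real.exp (-(c1 n) * t) - Real.exp (-(c2 n) * t))|
            + |Real.sqrt t * ((-(c1 n)) * Real.exp (-(c1 n) * t)
                - (-(c2 n)) * Real.exp (-(c2 n) * t))| := abs_add_le _ _
        _ = 1/(2*Real.sqrt t) * |Real.exp (-(c1 n) * t) - Real.exp (-(c2 n) * t)|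
            + Real.sqrt t * |(-(c1 n)) * Real.exp (-(c1 n) * t)
                - (-(c2 n)) * Real.exp (-(c2 n) * t)| := by
            rw [abs_mul, abs_mul, abs_of_nonneg (by positivity : (0:ℝ) ≤ 1/(2*Real.sqrt t)),
              abs_of_nonneg hstp.le]
        _ ≤ 1/(2*Real.sqrt (y/2)) * E0 + Real.sqrt (2*y) * ((c1 n + c2 n) * E0) := by
            apply add_le_add
            · have hd : 1/(2*Real.sqrt t) ≤ 1/(2*Real.sqrt (y/2)) :=
                one_div_le_one_div_of_le (by linarith) (by linarith)
              exact mul_le_mul hd habs1 (abs_nonneg _) (by positivity)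
            · exact mul_le_mul hs2 habs2 (abs_nonneg _) (Real.sqrt_nonneg _)
        _ ≤ u n := by
            simp only [hudef]
            rw [← hE0]
            have hce : c1 n + c2 n = (π/α + π/(2*α))*(n:ℝ)^2 := by
              simp only [hc1, hc2]; ring
            rw [hce]
            have h1 : 1/(2*Real.sqrt (y/2)) ≤ 1/Real.sqrt (y/2) :=
              one_div_le_one_div_of_le hsp (by linarith)
            have h2 : Real.sqrt (2*y) * (((π/α + π/(2*α))*(n:ℝ)^2) * E0)
                = Real.sqrt (2*y) * (π/α + π/(2*α)) * ((n:ℝ)^2 * E0) := by ring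
            rw [h2]
            exact add_le_add (mul_le_mul_of_nonneg_right h1 hE0pos.le) le_rfl
    have hyS : y ∈ Set.Ioo (y/2) (2*y) := ⟨by linarith, by linarith⟩
    have hg0 : Summable fun n : ℤ => g n y := by
      rw [hgdef]
      have h1 : Summable fun n : ℤ => Real.sqrt y * Real.exp (-(c1 n) * y) := by
        refine ((S0' (show (0:ℝ) < y/α by positivity)).mul_left (Real.sqrt y)).congr fun n => ?_
        rw [hc1]; congr 1; field_simp
      have h2 : Summable fun n : ℤ => Real.sqrt y * Real.exp (-(c2 n) * y) := by
        refine ((S0' (show (0:ℝ) < y/(2*α) by positivity)).mul_left (Real.sqrt y)).congr fun n => ?_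
        rw [hc2]; congr 1; field_simp
      refine (h1.sub h2).congr fun n => ?_
      ring
    have hder : HasDerivAt (fun z => ∑' n : ℤ, g n z) (∑' n : ℤ, g' n y) y :=
      hasDerivAt_tsum_of_isPreconnected hu isOpen_Ioo isPreconnected_Ioo
        hgderiv hbound hyS hg0 hyS
    have hev : (fun t : ℝ => Real.sqrt t * (theta3 (t / α) - theta3 (t / (2 * α))))
        =ᶠ[nhds y] (fun z => ∑' n : ℤ, g n z) := by
      filter_upwards [Ioo_mem_nhds (show y/2 < y by linarith) (show y < 2*y by linarith)] with t ht
      have ht0 : 0 < t := lt_trans (by linarith [ht.1]) ht.1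
      have hA : Summable fun n : ℤ => Real.exp (-(c1 n) * t) := by
        refine (S0' (show (0:ℝ) < t/α by positivity)).congr fun n => ?_
        rw [hc1]; congr 1; field_simp
      have hB : Summable fun n : ℤ => Real.exp (-(c2 n) * t) := by
        refine (S0' (show (0:ℝ) < t/(2*α) by positivity)).congr fun n => ?_
        rw [hc2]; congr 1; field_simp
      have h1 : theta3 (t/α) = ∑' n : ℤ, Real.exp (-(c1 n) * t) := by
        unfold theta3
        exact tsum_congr fun n => by rw [hc1]; congr 1; field_simp
      have h2 : theta3 (t/(2*α)) = ∑' n : ℤ, Real.exp (-(c2 n) * t) := by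
        unfold theta3
        exact tsum_congr fun n => by rw [hc2]; congr 1; field_simp
      rw [h1, h2, ← Summable.tsum_sub hA hB, ← tsum_mul_left]
    have hF : HasDerivAt (fun t : ℝ => Real.sqrt t * (theta3 (t / α) - theta3 (t / (2 * α))))
        (∑' n : ℤ, g' n y) y := hder.congr_of_eventuallyEq hev
    rw [hF.deriv]
    have hpos : ∀ n : ℤ, n ≠ 0 → 0 < g' n y := by
      intro n hn
      set B := π*(n:ℝ)^2*y/(2*α) with hBdef
      have hB : 2*π/5 ≤ B := hkeyB n hn
      have e1 : -(c1 n) * y = -(2*B) := by rw [hc1, hBdef]; field_simp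
      have e2 : -(c2 n) * y = -B := by rw [hc2, hBdef]; field_simp
      have ec1 : c1 n = 2*B/y := by rw [hc1, hBdef]; field_simp
      have ec2 : c2 n = B/y := by rw [hc2, hBdef]; field_simp
      rw [hg'def]
      simp only
      rw [e1, e2, ec1, ec2]
      exact term_pos' hy0 hB
    have hnn : ∀ n : ℤ, 0 ≤ g' n y := by
      intro n
      by_cases h : n = 0
      · subst h
        rw [hg'def]
        simp [hc1, hc2]
      · exact (hpos n h).le
    have hsum : Summable fun n : ℤ => g' n y :=
      Summable.of_norm_bounded hu (fun n => hbound n y hyS)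
    exact Summable.tsum_pos hsum hnn 1 (hpos 1 one_ne_zero)
end
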